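/- Let P be a probability distribution on ℝ^d × ℝ^L supported on points z = (x, y) with ‖x‖₂ ≤ R, and such that 0 ≤ ⟨y, y'⟩ ≤ L̄ for any two points in the support. There exists a universal constant C > 0 such that for every even n ≥ 2 and every δ ∈ (0,1), with probability at least 1 − δ over i.i.d. samples D = (z_1, …, z_n) from P, sup_{A ∈ Ã(r)} ( L̃(A; D) − L(A) ) ≤ C · (r R² + L̄)² · √((1 + log(1/δ))/n), where L̃(A; D) := (1/n) Σ_{k=1}^n E_{z ∼ P}[ℓ(A; z, z_k)] and L(A) := E_{z, z' i.i.d. ∼ P}[ℓ(A; z, z')]. -/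

import Mathlib

open MeasureTheory Finset
open scoped ENNReal

noncomputable section

/-- A labeled data point z = (x, y) ∈ ℝ^d × ℝ^L. -/
abbrev Pt (d L : ℕ) := (Fin d → ℝ) × (Fin L → ℝ)

/-- Inner product ⟨y, y'⟩ of label vectors. -/
def ipY {L : ℕ} (y y' : Fin L → ℝ) : ℝ := ∑ i, y i * y' i

/-- Bilinear form xᵀ A x'. -/
def qForm {d : ℕ} (A : Matrix (Fin d) (Fin d) ℝ) (x x' : Fin d → ℝ) : ℝ :=
  ∑ i, ∑ j, x i * A i j * x' j

/-- Euclidean norm ‖x‖₂. -/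
def norm2 {d : ℕ} (x : Fin d → ℝ) : ℝ := Real.sqrt (∑ i, x i ^ 2)

/-- Frobenius norm ‖A‖_F. -/
def frobNorm {d : ℕ} (A : Matrix (Fin d) (Fin d) ℝ) : ℝ :=
  Real.sqrt (∑ i, ∑ j, (A i j) ^ 2)

/-- Loss ℓ(A; z, z') := g(⟨y, y'⟩)·(⟨y, y'⟩ − xᵀ A x')² + λ·Tr(A). -/
def lossFn {d L : ℕ} (g : ℝ → ℝ) (lam : ℝ) (A : Matrix (Fin d) (Fin d) ℝ)
    (z z' : Pt d L) : ℝ :=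
  g (ipY z.2 z'.2) * (ipY z.2 z'.2 - qForm A z.1 z'.1) ^ 2 + lam * A.trace

/-- Empirical risk L̂(A; D) := (1/(n(n−1))) Σᵢ Σ_{j≠i} ℓ(A; zᵢ, zⱼ). -/
def empRisk {d L : ℕ} (g : ℝ → ℝ) (lam : ℝ) {n : ℕ} (A : Matrix (Fin d) (Fin d) ℝ)
    (D : Fin n → Pt d L) : ℝ :=
  (1 / ((n : ℝ) * ((n : ℝ) - 1))) * ∑ i, ∑ j ∈ univ.erase i, lossFn g lam A (D i) (D j)

/-- Population risk L(A) := E_{z,z' i.i.d. ∼ P}[ℓ(A; z, z')]. -/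
def popRisk {d L : ℕ} (g : ℝ → ℝ) (lam : ℝ) (P : Measure (Pt d L))
    (A : Matrix (Fin d) (Fin d) ℝ) : ℝ :=
  ∫ z, (∫ z', lossFn g lam A z z' ∂P) ∂P

/-- Risk relative to the training set, L̃(A; D) := (1/n) Σₖ E_{z∼P}[ℓ(A; z, zₖ)]. -/
def tilRisk {d L : ℕ} (g : ℝ → ℝ) (lam : ℝ) (P : Measure (Pt d L)) {n : ℕ}
    (A : Matrix (Fin d) (Fin d) ℝ) (D : Fin n → Pt d L) : ℝ :=
  (1 / (n : ℝ)) * ∑ k, ∫ z, lossFn g lam A z (D k) ∂P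

/-- Law of a Rademacher random variable: uniform on {−1, +1}. -/
def radMeasure : Measure ℝ :=
  (2⁻¹ : ℝ≥0∞) • Measure.dirac (-1) + (2⁻¹ : ℝ≥0∞) • Measure.dirac 1




lemma exp_le_add_exp_sq (x : ℝ) : Real.exp x ≤ x + Real.exp (x^2) := by
  rcases le_or_gt |x| 1 with h | h
  · have h2 := Real.exp_bound h (n := 2) (by norm_num)
    have hs : ∑ m ∈ Finset.range 2, x ^ m / (Nat.factorial m : ℝ) = 1 + x := by
      simp [Finset.sum_range_succ]
    rw [hs] at h2
    have h3 : Real.exp x - (1 + x) ≤ |x| ^ 2 * (3 / (2 * 2)) := by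
      have := (abs_le.1 h2).2
      norm_num at this ⊢
      linarith
    have h4 : 1 + x^2 ≤ Real.exp (x^2) := by linarith [Real.add_one_le_exp (x^2)]
    have h5 : |x| ^ 2 = x ^ 2 := sq_abs x
    nlinarith
  · rcases le_or_gt 0 x with hx | hx
    · have : Real.exp x ≤ Real.exp (x^2) := Real.exp_le_exp.2 (by nlinarith [abs_of_nonneg hx])
      linarith
    · have h1 : Real.exp x ≤ 1 := Real.exp_le_one_iff.2 hx.le
      have h2 : (-x) + 1 ≤ Real.exp (-x) := Real.add_one_le_exp _
      have h3 : Real.exp (-x) ≤ Real.exp (x^2) := Real.exp_le_exp.2 (by nlinarith [abs_of_neg hx])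
      linarith

lemma integrable_of_bdd {α : Type*} [MeasurableSpace α] {μ : Measure α} [IsFiniteMeasure μ]
    {E : Type*} [NormedAddCommGroup E] {f : α → E} (hf : AEStronglyMeasurable f μ)
    {K : ℝ} (h : ∀ᵐ a ∂μ, ‖f a‖ ≤ K) : Integrable f μ :=
  Integrable.mono' (integrable_const K) hf h

lemma mgf_bdd {Ω : Type*} [MeasurableSpace Ω] (μ : Measure Ω) [IsProbabilityMeasure μ]
    (X : Ω → ℝ) (hX : Measurable X) {c s : ℝ} (hc : ∀ ω, |X ω| ≤ c)
    (hmean : ∫ ω, X ω ∂μ = 0) :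
    ∫ ω, Real.exp (s * X ω) ∂μ ≤ Real.exp (s ^ 2 * c ^ 2) := by
  rcases isEmpty_or_nonempty Ω with hΩ | hΩ
  · exact absurd (measure_univ (μ := μ)) (by simp [Set.univ_eq_empty_iff.2 hΩ])
  have hc0 : 0 ≤ c := le_trans (abs_nonneg _) (hc hΩ.some)
  have hintX : Integrable X μ :=
    integrable_of_bdd hX.aestronglyMeasurable (Filter.Eventually.of_forall fun ω => by
      simpa using hc ω)
  have hpt : ∀ ω, Real.exp (s * X ω) ≤ s * X ω + Real.exp (s ^ 2 * c ^ 2) := by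
    intro ω
    have h1 := exp_le_add_exp_sq (s * X ω)
    have h2 : (s * X ω) ^ 2 ≤ s ^ 2 * c ^ 2 := by
      have h := hc ω
      have hx2 : X ω ^ 2 ≤ c ^ 2 := by nlinarith [sq_abs (X ω), abs_nonneg (X ω)]
      have : (s * X ω) ^ 2 = s ^ 2 * X ω ^ 2 := by ring
      rw [this]
      exact mul_le_mul_of_nonneg_left hx2 (sq_nonneg s)
    have h3 : Real.exp ((s * X ω) ^ 2) ≤ Real.exp (s ^ 2 * c ^ 2) := Real.exp_le_exp.2 h2
    linarith
  have hint1 : Integrable (fun ω => Real.exp (s * X ω)) μ := by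
    refine integrable_of_bdd ((Real.measurable_exp.comp (hX.const_mul s)).aestronglyMeasurable)
      (K := Real.exp (|s| * c)) (Filter.Eventually.of_forall fun ω => ?_)
    rw [Real.norm_eq_abs, abs_of_pos (Real.exp_pos _)]
    refine Real.exp_le_exp.2 ?_
    calc s * X ω ≤ |s * X ω| := le_abs_self _
    _ = |s| * |X ω| := abs_mul _ _
    _ ≤ |s| * c := by nlinarith [abs_nonneg s, hc ω]
  have hint2 : Integrable (fun ω => s * X ω + Real.exp (s ^ 2 * c ^ 2)) μ :=
    (hintX.const_mul s).add (integrable_const _)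
  calc ∫ ω, Real.exp (s * X ω) ∂μ ≤ ∫ ω, (s * X ω + Real.exp (s ^ 2 * c ^ 2)) ∂μ :=
        integral_mono hint1 hint2 hpt
    _ = s * ∫ ω, X ω ∂μ + Real.exp (s ^ 2 * c ^ 2) := by
        rw [integral_add (hintX.const_mul s) (integrable_const _), integral_const_mul,
          integral_const]
        simp
    _ = Real.exp (s ^ 2 * c ^ 2) := by rw [hmean]; ring

lemma mcdiarmid_mgf {Ω : Type*} [MeasurableSpace Ω] (μ : Measure Ω) [IsProbabilityMeasure μ] :
    ∀ (n : ℕ) (f : (Fin n → Ω) → ℝ) (K c s : ℝ), Measurable f → (∀ D, |f D| ≤ K) →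
    (∀ (D : Fin n → Ω) (i : Fin n) (z : Ω), |f (Function.update D i z) - f D| ≤ c) →
    ∫ D, Real.exp (s * (f D - ∫ D', f D' ∂(Measure.pi fun _ : Fin n => μ)))
        ∂(Measure.pi fun _ : Fin n => μ) ≤ Real.exp (n * (s ^ 2 * c ^ 2)) := by
  intro n
  induction n with
  | zero =>
    intro f K c s hf hK hlip
    have hconst : ∀ D : Fin 0 → Ω, f D = f default := fun D => by
      congr 1; exact Subsingleton.elim _ _
    have : ∫ D', f D' ∂(Measure.pi fun _ : Fin 0 => μ) = f default := by
      rw [integral_congr_ae (Filter.Eventually.of_forall hconst), integral_const]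
      simp
    rw [this]
    have : ∀ D : Fin 0 → Ω, Real.exp (s * (f D - f default)) = 1 := fun D => by
      rw [hconst D]; simp
    rw [integral_congr_ae (Filter.Eventually.of_forall this), integral_const]
    simp
  | succ n ih =>
    intro f K c s hf hK hlip
    rcases isEmpty_or_nonempty Ω with hΩ | hΩ
    · exact absurd (measure_univ (μ := μ)) (by simp [Set.univ_eq_empty_iff.2 hΩ])
    have hc0 : 0 ≤ c := le_trans (abs_nonneg _) (hlip (fun _ => hΩ.some) 0 hΩ.some)
    set π : Measure (Fin (n+1) → Ω) := Measure.pi fun _ => μ with hπ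
    set πn : Measure (Fin n → Ω) := Measure.pi fun _ => μ with hπn
    set e := MeasurableEquiv.piFinSuccAbove (fun _ : Fin (n+1) => Ω) 0 with he
    have hesymm : ∀ (z : Ω) (D : Fin n → Ω), e.symm (z, D) = Fin.cons z D := by
      intro z D
      simp [he, MeasurableEquiv.piFinSuccAbove, Fin.insertNthEquiv]
    have hmp : MeasurePreserving e.symm (μ.prod πn) π :=
      (MeasureTheory.measurePreserving_piFinSuccAbove (fun _ : Fin (n+1) => μ) 0).symm
    -- transfer of integrals
    have htrans : ∀ (G : (Fin (n+1) → Ω) → ℝ),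
        ∫ D, G D ∂π = ∫ p : Ω × (Fin n → Ω), G (Fin.cons p.1 p.2) ∂(μ.prod πn) := by
      intro G
      rw [← hmp.integral_comp e.symm.measurableEmbedding G]
      refine integral_congr_ae (Filter.Eventually.of_forall fun p => ?_)
      rcases p with ⟨z, D⟩
      dsimp only
      rw [hesymm z D]
    -- the conditional mean function
    set g : (Fin n → Ω) → ℝ := fun D => ∫ z, f (Fin.cons z D) ∂μ with hg
    have hconsm : Measurable (fun p : Ω × (Fin n → Ω) => f (Fin.cons p.1 p.2)) := by
      refine hf.comp ?_
      refine measurable_pi_lambda _ (fun i => ?_)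
      refine Fin.cases ?_ (fun j => ?_) i
      · simpa using measurable_fst
      · simpa [Function.comp_def] using (measurable_pi_apply j).comp measurable_snd
    have hgsm : StronglyMeasurable g :=
      (hconsm.stronglyMeasurable).integral_prod_left'
    have hsecm : ∀ D : Fin n → Ω, Measurable (fun z => f (Fin.cons z D)) := fun D =>
      hconsm.comp (measurable_id.prodMk measurable_const)
    have hint_sec : ∀ D : Fin n → Ω, Integrable (fun z => f (Fin.cons z D)) μ := fun D =>
      integrable_of_bdd (hsecm D).aestronglyMeasurable
        (Filter.Eventually.of_forall fun z => by simpa using hK _)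
    have hgK : ∀ D, |g D| ≤ K := by
      intro D
      have := norm_integral_le_of_norm_le_const (μ := μ)
        (f := fun z => f (Fin.cons z D)) (C := K)
        (Filter.Eventually.of_forall fun z => by simpa using hK _)
      simpa using this
    have hglip : ∀ (D : Fin n → Ω) (i : Fin n) (z : Ω), |g (Function.update D i z) - g D| ≤ c := by
      intro D i z
      have : g (Function.update D i z) - g D
          = ∫ w, (f (Fin.cons w (Function.update D i z)) - f (Fin.cons w D)) ∂μ := by
        rw [integral_sub (hint_sec _) (hint_sec _)]
      rw [this]
      have := norm_integral_le_of_norm_le_const (μ := μ)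
        (f := fun w => f (Fin.cons w (Function.update D i z)) - f (Fin.cons w D)) (C := c)
        (Filter.Eventually.of_forall fun w => by
          rw [Fin.cons_update]
          simpa using hlip (Fin.cons w D) i.succ z)
      simpa using this
    -- mean transfer
    have hintf : Integrable (fun p : Ω × (Fin n → Ω) => f (Fin.cons p.1 p.2)) (μ.prod πn) :=
      integrable_of_bdd hconsm.aestronglyMeasurable
        (Filter.Eventually.of_forall fun p => by simpa using hK _)
    have hM : ∫ D, f D ∂π = ∫ D, g D ∂πn := by
      rw [htrans f, integral_prod_symm _ hintf]
    set M := ∫ D, f D ∂π with hMdef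
    -- inner bound
    have hinner : ∀ D : Fin n → Ω,
        ∫ z, Real.exp (s * (f (Fin.cons z D) - M)) ∂μ
          ≤ Real.exp (s ^ 2 * c ^ 2) * Real.exp (s * (g D - M)) := by
      intro D
      have hXc : ∀ z, |f (Fin.cons z D) - g D| ≤ c := by
        intro z
        have : f (Fin.cons z D) - g D
            = ∫ w, (f (Fin.cons z D) - f (Fin.cons w D)) ∂μ := by
          rw [integral_sub (integrable_const _) (hint_sec D), integral_const]
          simp [hg]
        rw [this]
        have := norm_integral_le_of_norm_le_const (μ := μ)
          (f := fun w => f (Fin.cons z D) - f (Fin.cons w D)) (C := c)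
          (Filter.Eventually.of_forall fun w => by
            have h1 := Fin.update_cons_zero (α := fun _ : Fin (n+1) => Ω) z D w
            have h2 := hlip (Fin.cons z D) 0 w
            rw [h1] at h2
            rw [Real.norm_eq_abs, abs_sub_comm]
            exact h2)
        simpa using this
      have hXmean : ∫ z, (f (Fin.cons z D) - g D) ∂μ = 0 := by
        rw [integral_sub (hint_sec D) (integrable_const _), integral_const]
        simp [hg]
      have key := mgf_bdd μ (fun z => f (Fin.cons z D) - g D)
        ((hsecm D).sub measurable_const) (s := s) hXc hXmean
      calc ∫ z, Real.exp (s * (f (Fin.cons z D) - M)) ∂μ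
          = ∫ z, Real.exp (s * (f (Fin.cons z D) - g D)) * Real.exp (s * (g D - M)) ∂μ := by
            refine integral_congr_ae (Filter.Eventually.of_forall fun z => ?_)
            dsimp only
            rw [← Real.exp_add]
            congr 1
            ring
        _ = (∫ z, Real.exp (s * (f (Fin.cons z D) - g D)) ∂μ) * Real.exp (s * (g D - M)) := by
            rw [integral_mul_const]
        _ ≤ Real.exp (s ^ 2 * c ^ 2) * Real.exp (s * (g D - M)) := by
            exact mul_le_mul_of_nonneg_right key (Real.exp_pos _).le
    -- outer step
    have hintexp : Integrable (fun p : Ω × (Fin n → Ω) =>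
        Real.exp (s * (f (Fin.cons p.1 p.2) - M))) (μ.prod πn) := by
      refine integrable_of_bdd ((Real.measurable_exp.comp
        ((hconsm.sub measurable_const).const_mul s)).aestronglyMeasurable)
        (K := Real.exp (|s| * (K + K))) (Filter.Eventually.of_forall fun p => ?_)
      rw [Real.norm_eq_abs, abs_of_pos (Real.exp_pos _)]
      refine Real.exp_le_exp.2 ?_
      have h1 : |f (Fin.cons p.1 p.2) - M| ≤ K + K := by
        have := hK (Fin.cons p.1 p.2)
        have h2 : |M| ≤ K := by
          rw [hM]
          have := norm_integral_le_of_norm_le_const (μ := πn) (f := g) (C := K)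
            (Filter.Eventually.of_forall fun D => by simpa using hgK D)
          simpa using this
        calc |f (Fin.cons p.1 p.2) - M| ≤ |f (Fin.cons p.1 p.2)| + |M| := abs_sub _ _
          _ ≤ K + K := add_le_add (hK _) h2
      calc s * (f (Fin.cons p.1 p.2) - M) ≤ |s * (f (Fin.cons p.1 p.2) - M)| := le_abs_self _
        _ = |s| * |f (Fin.cons p.1 p.2) - M| := abs_mul _ _
        _ ≤ |s| * (K + K) := mul_le_mul_of_nonneg_left h1 (abs_nonneg s)
    have main : ∫ D, Real.exp (s * (f D - M)) ∂π
        = ∫ D, (∫ z, Real.exp (s * (f (Fin.cons z D) - M)) ∂μ) ∂πn := by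
      rw [htrans (fun D => Real.exp (s * (f D - M)))]
      exact integral_prod_symm _ hintexp
    rw [main]
    have hintlhs : Integrable (fun D : Fin n → Ω =>
        ∫ z, Real.exp (s * (f (Fin.cons z D) - M)) ∂μ) πn := by
      refine integrable_of_bdd (StronglyMeasurable.aestronglyMeasurable ?_)
        (K := Real.exp (|s| * (K + K))) (Filter.Eventually.of_forall fun D => ?_)
      · exact ((Real.measurable_exp.comp
          ((hconsm.sub measurable_const).const_mul s)).stronglyMeasurable).integral_prod_left'
      · have := norm_integral_le_of_norm_le_const (μ := μ)
          (f := fun z => Real.exp (s * (f (Fin.cons z D) - M))) (C := Real.exp (|s| * (K + K)))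
          (Filter.Eventually.of_forall fun z => by
            rw [Real.norm_eq_abs, abs_of_pos (Real.exp_pos _)]
            refine Real.exp_le_exp.2 ?_
            have h2 : |M| ≤ K := by
              rw [hM]
              have := norm_integral_le_of_norm_le_const (μ := πn) (f := g) (C := K)
                (Filter.Eventually.of_forall fun D' => by simpa using hgK D')
              simpa using this
            have h1 : |f (Fin.cons z D) - M| ≤ K + K := by
              calc |f (Fin.cons z D) - M| ≤ |f (Fin.cons z D)| + |M| := abs_sub _ _
                _ ≤ K + K := add_le_add (hK _) h2
            calc s * (f (Fin.cons z D) - M) ≤ |s * (f (Fin.cons z D) - M)| := le_abs_self _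
              _ = |s| * |f (Fin.cons z D) - M| := abs_mul _ _
              _ ≤ |s| * (K + K) := mul_le_mul_of_nonneg_left h1 (abs_nonneg s)
          )
        simpa using this
    have hintrhs : Integrable (fun D : Fin n → Ω =>
        Real.exp (s ^ 2 * c ^ 2) * Real.exp (s * (g D - M))) πn := by
      refine Integrable.const_mul ?_ _
      refine integrable_of_bdd ((Real.measurable_exp.comp
        ((hgsm.measurable.sub measurable_const).const_mul s)).aestronglyMeasurable)
        (K := Real.exp (|s| * (K + K))) (Filter.Eventually.of_forall fun D => ?_)
      rw [Real.norm_eq_abs, abs_of_pos (Real.exp_pos _)]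
      refine Real.exp_le_exp.2 ?_
      have h2 : |M| ≤ K := by
        rw [hM]
        have := norm_integral_le_of_norm_le_const (μ := πn) (f := g) (C := K)
          (Filter.Eventually.of_forall fun D' => by simpa using hgK D')
        simpa using this
      have h1 : |g D - M| ≤ K + K :=
        calc |g D - M| ≤ |g D| + |M| := abs_sub _ _
          _ ≤ K + K := add_le_add (hgK _) h2
      calc s * (g D - M) ≤ |s * (g D - M)| := le_abs_self _
        _ = |s| * |g D - M| := abs_mul _ _
        _ ≤ |s| * (K + K) := mul_le_mul_of_nonneg_left h1 (abs_nonneg s)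
    calc ∫ D, (∫ z, Real.exp (s * (f (Fin.cons z D) - M)) ∂μ) ∂πn
        ≤ ∫ D, Real.exp (s ^ 2 * c ^ 2) * Real.exp (s * (g D - M)) ∂πn :=
          integral_mono hintlhs hintrhs hinner
      _ = Real.exp (s ^ 2 * c ^ 2) * ∫ D, Real.exp (s * (g D - M)) ∂πn := integral_const_mul _ _
      _ ≤ Real.exp (s ^ 2 * c ^ 2) * Real.exp (n * (s ^ 2 * c ^ 2)) := by
          refine mul_le_mul_of_nonneg_left ?_ (Real.exp_pos _).le
          have h := ih g K c s hgsm.measurable hgK hglip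
          rw [hM]
          exact h
      _ = Real.exp ((n + 1 : ℕ) * (s ^ 2 * c ^ 2)) := by
          rw [← Real.exp_add]
          push_cast
          ring_nf

lemma mcdiarmid_tail {Ω : Type*} [MeasurableSpace Ω] (μ : Measure Ω) [IsProbabilityMeasure μ]
    (n : ℕ) (hn : 1 ≤ n) (f : (Fin n → Ω) → ℝ) (K c : ℝ) (hc : 0 < c)
    (hf : Measurable f) (hK : ∀ D, |f D| ≤ K)
    (hlip : ∀ (D : Fin n → Ω) (i : Fin n) (z : Ω), |f (Function.update D i z) - f D| ≤ c)
    (t : ℝ) (ht : 0 ≤ t) :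
    (Measure.pi fun _ : Fin n => μ)
        {D | (∫ D', f D' ∂(Measure.pi fun _ : Fin n => μ)) + t ≤ f D}
      ≤ ENNReal.ofReal (Real.exp (-(t ^ 2) / (4 * n * c ^ 2))) := by
  set π := Measure.pi fun _ : Fin n => μ with hπ
  haveI : IsProbabilityMeasure π := by rw [hπ]; infer_instance
  set M := ∫ D', f D' ∂π with hM
  set s : ℝ := t / (2 * n * c ^ 2) with hs
  have hn0 : (0 : ℝ) < n := by exact_mod_cast hn
  have hs0 : 0 ≤ s := by positivity
  have hmgf := mcdiarmid_mgf μ n f K c s hf hK hlip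
  -- Markov
  have hsub : {D | M + t ≤ f D} ⊆ {D | Real.exp (s * t) ≤ Real.exp (s * (f D - M))} := by
    intro D hD
    simp only [Set.mem_setOf_eq] at hD ⊢
    exact Real.exp_le_exp.2 (mul_le_mul_of_nonneg_left (by linarith) hs0)
  have hYint : Integrable (fun D => Real.exp (s * (f D - M))) π := by
    refine integrable_of_bdd ((Real.measurable_exp.comp
      ((hf.sub measurable_const).const_mul s)).aestronglyMeasurable)
      (K := Real.exp (s * (K + |M|))) (Filter.Eventually.of_forall fun D => ?_)
    rw [Real.norm_eq_abs, abs_of_pos (Real.exp_pos _)]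
    refine Real.exp_le_exp.2 ?_
    have : |f D - M| ≤ K + |M| := le_trans (abs_sub _ _) (add_le_add (hK D) le_rfl)
    calc s * (f D - M) ≤ |s * (f D - M)| := le_abs_self _
      _ = s * |f D - M| := by rw [abs_mul, abs_of_nonneg hs0]
      _ ≤ s * (K + |M|) := mul_le_mul_of_nonneg_left this hs0
  have hmarkov := mul_meas_ge_le_integral_of_nonneg
    (μ := π) (f := fun D => Real.exp (s * (f D - M)))
    (Filter.Eventually.of_forall fun D => (Real.exp_pos _).le) hYint (Real.exp (s * t))
  have h1 : (π {D | Real.exp (s * t) ≤ Real.exp (s * (f D - M))}).toReal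
      ≤ Real.exp (n * (s ^ 2 * c ^ 2)) / Real.exp (s * t) := by
    rw [le_div_iff₀ (Real.exp_pos _), mul_comm]
    exact le_trans hmarkov hmgf
  have hexp : Real.exp (n * (s ^ 2 * c ^ 2)) / Real.exp (s * t)
      = Real.exp (-(t ^ 2) / (4 * n * c ^ 2)) := by
    rw [← Real.exp_sub]
    congr 1
    rw [hs]
    field_simp
    ring
  have hfin : π {D | M + t ≤ f D} ≠ ⊤ := measure_ne_top _ _
  have h2 : (π {D | M + t ≤ f D}).toReal
      ≤ (π {D | Real.exp (s * t) ≤ Real.exp (s * (f D - M))}).toReal := by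
    exact ENNReal.toReal_mono (measure_ne_top _ _) (measure_mono hsub)
  rw [← ENNReal.ofReal_toReal hfin]
  refine ENNReal.ofReal_le_ofReal ?_
  rw [← hexp]
  exact le_trans h2 h1

-- second moment of sums of centered iid Hilbert-valued
lemma sum_sq_int {Ω : Type*} [MeasurableSpace Ω] (μ : Measure Ω) [IsProbabilityMeasure μ]
    {E : Type*} [NormedAddCommGroup E] [InnerProductSpace ℝ E] [CompleteSpace E]
    [MeasurableSpace E] [BorelSpace E] [SecondCountableTopology E] :
    ∀ (n : ℕ) (η : Ω → E) (b : ℝ), Measurable η → (∀ ω, ‖η ω‖ ≤ b) →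
    (∫ ω, η ω ∂μ) = 0 →
    ∫ D, ‖∑ k, η (D k)‖ ^ 2 ∂(Measure.pi fun _ : Fin n => μ) ≤ n * b ^ 2 := by
  intro n
  induction n with
  | zero =>
    intro η b hη hb hmean
    simp
  | succ n ih =>
    intro η b hη hb hmean
    rcases isEmpty_or_nonempty Ω with hΩ | hΩ
    · exact absurd (measure_univ (μ := μ)) (by simp [Set.univ_eq_empty_iff.2 hΩ])
    have hb0 : 0 ≤ b := le_trans (norm_nonneg _) (hb hΩ.some)
    set π : Measure (Fin (n+1) → Ω) := Measure.pi fun _ => μ with hπ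
    set πn : Measure (Fin n → Ω) := Measure.pi fun _ => μ with hπn
    haveI : IsProbabilityMeasure πn := by rw [hπn]; infer_instance
    set e := MeasurableEquiv.piFinSuccAbove (fun _ : Fin (n+1) => Ω) 0 with he
    have hesymm : ∀ (z : Ω) (D : Fin n → Ω), e.symm (z, D) = Fin.cons z D := by
      intro z D
      simp [he, MeasurableEquiv.piFinSuccAbove, Fin.insertNthEquiv]
    have hmp : MeasurePreserving e.symm (μ.prod πn) π :=
      (MeasureTheory.measurePreserving_piFinSuccAbove (fun _ : Fin (n+1) => μ) 0).symm
    have htrans : ∀ (G : (Fin (n+1) → Ω) → ℝ),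
        ∫ D, G D ∂π = ∫ p : Ω × (Fin n → Ω), G (Fin.cons p.1 p.2) ∂(μ.prod πn) := by
      intro G
      rw [← hmp.integral_comp e.symm.measurableEmbedding G]
      refine integral_congr_ae (Filter.Eventually.of_forall fun p => ?_)
      rcases p with ⟨z, D⟩
      dsimp only
      rw [hesymm z D]
    have hsum_cons : ∀ (z : Ω) (D : Fin n → Ω),
        (∑ k : Fin (n+1), η (Fin.cons (α := fun _ : Fin (n+1) => Ω) z D k)) = η z + ∑ k : Fin n, η (D k) := by
      intro z D
      rw [Fin.sum_univ_succ]
      simp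
    have hηk : ∀ k : Fin n, Measurable (fun D : Fin n → Ω => η (D k)) :=
      fun k => hη.comp (measurable_pi_apply k)
    have hSmeas : Measurable (fun D : Fin n → Ω => ∑ k, η (D k)) :=
      Finset.measurable_sum _ (fun k _ => hηk k)
    have hsum_bd : ∀ D : Fin n → Ω, ‖∑ k, η (D k)‖ ≤ n * b := by
      intro D
      calc ‖∑ k, η (D k)‖ ≤ ∑ k : Fin n, ‖η (D k)‖ := norm_sum_le _ _
        _ ≤ ∑ _k : Fin n, b := Finset.sum_le_sum (fun k _ => hb _)
        _ = n * b := by simp [mul_comm]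
    -- main computation
    have key : ∀ D : Fin n → Ω,
        ∫ z, ‖η z + ∑ k, η (D k)‖ ^ 2 ∂μ ≤ ‖∑ k, η (D k)‖ ^ 2 + b ^ 2 := by
      intro D
      set S := ∑ k, η (D k) with hS
      have hexpand : ∀ z, ‖η z + S‖ ^ 2 = ‖η z‖ ^ 2 + 2 * inner ℝ (S) (η z) + ‖S‖ ^ 2 := by
        intro z
        rw [← real_inner_self_eq_norm_sq, ← real_inner_self_eq_norm_sq,
          ← real_inner_self_eq_norm_sq]
        rw [inner_add_add_self]
        rw [real_inner_comm (η z) S]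
        ring
      have hηint : Integrable η μ :=
        integrable_of_bdd hη.aestronglyMeasurable (Filter.Eventually.of_forall hb)
      have hint1 : Integrable (fun z => ‖η z‖ ^ 2) μ := by
        refine integrable_of_bdd ((hη.norm.pow_const 2).aestronglyMeasurable)
          (K := b ^ 2) (Filter.Eventually.of_forall fun z => ?_)
        rw [Real.norm_eq_abs, abs_of_nonneg (by positivity)]
        exact pow_le_pow_left₀ (norm_nonneg _) (hb z) 2
      have hint2 : Integrable (fun z => 2 * inner ℝ S (η z) : Ω → ℝ) μ := by
        refine Integrable.const_mul ?_ 2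
        refine integrable_of_bdd ?_ (K := ‖S‖ * b) (Filter.Eventually.of_forall fun z => ?_)
        · exact ((measurable_const.inner hη)).aestronglyMeasurable
        · rw [Real.norm_eq_abs]
          calc |(inner ℝ S (η z) : ℝ)| ≤ ‖S‖ * ‖η z‖ := abs_real_inner_le_norm _ _
            _ ≤ ‖S‖ * b := mul_le_mul_of_nonneg_left (hb z) (norm_nonneg _)
      calc ∫ z, ‖η z + S‖ ^ 2 ∂μ
          = ∫ z, (‖η z‖ ^ 2 + 2 * inner ℝ S (η z) + ‖S‖ ^ 2) ∂μ :=
            integral_congr_ae (Filter.Eventually.of_forall fun z => by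
              dsimp only; rw [hexpand z])
        _ = (∫ z, ‖η z‖ ^ 2 ∂μ) + (∫ z, (2 * inner ℝ S (η z) : ℝ) ∂μ) + ‖S‖ ^ 2 := by
            have hint12 : Integrable (fun z => (‖η z‖ ^ 2 + 2 * inner ℝ S (η z) : ℝ)) μ :=
              hint1.add hint2
            have e1 : ∫ z, (‖η z‖ ^ 2 + 2 * inner ℝ S (η z) + ‖S‖ ^ 2) ∂μ
                = (∫ z, (‖η z‖ ^ 2 + 2 * inner ℝ S (η z) : ℝ) ∂μ) + ‖S‖ ^ 2 := by
              rw [integral_add hint12 (integrable_const _), integral_const]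
              simp
            have e2 : ∫ z, (‖η z‖ ^ 2 + 2 * inner ℝ S (η z) : ℝ) ∂μ
                = (∫ z, ‖η z‖ ^ 2 ∂μ) + ∫ z, (2 * inner ℝ S (η z) : ℝ) ∂μ :=
              integral_add hint1 hint2
            rw [e1, e2]
        _ = (∫ z, ‖η z‖ ^ 2 ∂μ) + 2 * (inner ℝ S (∫ z, η z ∂μ) : ℝ) + ‖S‖ ^ 2 := by
            rw [integral_const_mul, integral_inner hηint]
        _ = (∫ z, ‖η z‖ ^ 2 ∂μ) + ‖S‖ ^ 2 := by rw [hmean]; simp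
        _ ≤ b ^ 2 + ‖S‖ ^ 2 := by
            have : ∫ z, ‖η z‖ ^ 2 ∂μ ≤ b ^ 2 := by
              have := norm_integral_le_of_norm_le_const (μ := μ)
                (f := fun z => ‖η z‖ ^ 2) (C := b ^ 2)
                (Filter.Eventually.of_forall fun z => by
                  rw [Real.norm_eq_abs, abs_of_nonneg (by positivity)]
                  exact pow_le_pow_left₀ (norm_nonneg _) (hb z) 2)
              simp only [probReal_univ, mul_one] at this
              exact le_trans (le_abs_self _) this
            linarith
        _ = ‖S‖ ^ 2 + b ^ 2 := by ring
    -- put together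
    have hmain : ∫ D, ‖∑ k, η (D k)‖ ^ 2 ∂π
        = ∫ D, (∫ z, ‖η z + ∑ k, η (D k)‖ ^ 2 ∂μ) ∂πn := by
      rw [htrans (fun D => ‖∑ k, η (D k)‖ ^ 2)]
      have : ∀ p : Ω × (Fin n → Ω),
          ‖∑ k, η (Fin.cons (α := fun _ : Fin (n+1) => Ω) p.1 p.2 k)‖ ^ 2 = ‖η p.1 + ∑ k, η (p.2 k)‖ ^ 2 := by
        intro p; rw [hsum_cons]
      rw [integral_congr_ae (Filter.Eventually.of_forall this)]
      refine integral_prod_symm _ ?_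
      refine integrable_of_bdd ?_ (K := ((n+1) * b) ^ 2) (Filter.Eventually.of_forall fun p => ?_)
      · refine Measurable.aestronglyMeasurable ?_
        refine Measurable.pow_const ?_ 2
        refine Measurable.norm ?_
        exact (hη.comp measurable_fst).add (hSmeas.comp measurable_snd)
      · rw [Real.norm_eq_abs, abs_of_nonneg (by positivity)]
        have h1 : ‖η p.1 + ∑ k, η (p.2 k)‖ ≤ (n+1) * b := by
          calc ‖η p.1 + ∑ k, η (p.2 k)‖ ≤ ‖η p.1‖ + ‖∑ k, η (p.2 k)‖ := norm_add_le _ _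
            _ ≤ b + n * b := add_le_add (hb _) (hsum_bd _)
            _ = (n+1) * b := by ring
        exact pow_le_pow_left₀ (norm_nonneg _) h1 2
    rw [hmain]
    have hintin : Integrable (fun D : Fin n → Ω =>
        ∫ z, ‖η z + ∑ k, η (D k)‖ ^ 2 ∂μ) πn := by
      refine integrable_of_bdd ?_ (K := ((n+1) * b) ^ 2) (Filter.Eventually.of_forall fun D => ?_)
      · refine StronglyMeasurable.aestronglyMeasurable ?_
        refine StronglyMeasurable.integral_prod_left' (f := fun p : Ω × (Fin n → Ω) =>
          ‖η p.1 + ∑ k, η (p.2 k)‖ ^ 2) ?_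
        exact (((hη.comp measurable_fst).add (hSmeas.comp measurable_snd)).norm.pow_const
          2).stronglyMeasurable
      · have := norm_integral_le_of_norm_le_const (μ := μ)
          (f := fun z => ‖η z + ∑ k, η (D k)‖ ^ 2) (C := ((n+1) * b) ^ 2)
          (Filter.Eventually.of_forall fun z => by
            rw [Real.norm_eq_abs, abs_of_nonneg (by positivity)]
            refine pow_le_pow_left₀ (norm_nonneg _) ?_ 2
            calc ‖η z + ∑ k, η (D k)‖ ≤ ‖η z‖ + ‖∑ k, η (D k)‖ := norm_add_le _ _
              _ ≤ b + n * b := add_le_add (hb _) (hsum_bd _)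
              _ = (n+1) * b := by ring)
        simpa using this
    have hintS2 : Integrable (fun D : Fin n → Ω => ‖∑ k, η (D k)‖ ^ 2) πn := by
      refine integrable_of_bdd ((hSmeas.norm.pow_const 2).aestronglyMeasurable)
        (K := (n * b) ^ 2) (Filter.Eventually.of_forall fun D => ?_)
      rw [Real.norm_eq_abs, abs_of_nonneg (by positivity)]
      exact pow_le_pow_left₀ (norm_nonneg _) (hsum_bd D) 2
    have hintS : Integrable (fun D : Fin n → Ω => ‖∑ k, η (D k)‖ ^ 2 + b ^ 2) πn :=
      hintS2.add (integrable_const _)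
    calc ∫ D, (∫ z, ‖η z + ∑ k, η (D k)‖ ^ 2 ∂μ) ∂πn
        ≤ ∫ D, (‖∑ k, η (D k)‖ ^ 2 + b ^ 2) ∂πn := integral_mono hintin hintS key
      _ = (∫ D, ‖∑ k, η (D k)‖ ^ 2 ∂πn) + b ^ 2 := by
          rw [integral_add hintS2 (integrable_const _), integral_const]
          simp
      _ ≤ n * b ^ 2 + b ^ 2 := by
          have := ih η b hη hb hmean
          linarith
      _ = (n + 1 : ℕ) * b ^ 2 := by push_cast; ring

lemma hilbert_conc {Ω : Type*} [MeasurableSpace Ω] (μ : Measure Ω) [IsProbabilityMeasure μ]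
    {E : Type*} [NormedAddCommGroup E] [InnerProductSpace ℝ E] [CompleteSpace E]
    [MeasurableSpace E] [BorelSpace E] [SecondCountableTopology E]
    (ξ : Ω → E) (hξ : Measurable ξ) {B : ℝ} (hB : 0 ≤ B) (hbd : ∀ ω, ‖ξ ω‖ ≤ B)
    (n : ℕ) (hn : 1 ≤ n) {δ' : ℝ} (hδ0 : 0 < δ') (hδ1 : δ' ≤ 1) :
    (Measure.pi fun _ : Fin n => μ)
      {D | 2 * B * Real.sqrt n + 4 * B * Real.sqrt (n * Real.log (1 / δ'))
            < ‖∑ k, (ξ (D k) - ∫ ω, ξ ω ∂μ)‖}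
      ≤ ENNReal.ofReal δ' := by
  set π := Measure.pi fun _ : Fin n => μ with hπ
  haveI : IsProbabilityMeasure π := by rw [hπ]; infer_instance
  set m := ∫ ω, ξ ω ∂μ with hm
  set η : Ω → E := fun ω => ξ ω - m with hη
  have hlog0 : 0 ≤ Real.log (1 / δ') := Real.log_nonneg (by
    rw [le_div_iff₀ hδ0]; linarith)
  rcases eq_or_lt_of_le hB with hB0 | hBpos
  · -- B = 0 : ξ ≡ 0
    have hξ0 : ∀ ω, ξ ω = 0 := fun ω =>
      norm_le_zero_iff.1 (by rw [hB0]; exact hbd ω)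
    have hset : {D : Fin n → Ω | 2 * B * Real.sqrt n + 4 * B * Real.sqrt (n * Real.log (1 / δ'))
        < ‖∑ k, (ξ (D k) - m)‖} = ∅ := by
      refine Set.eq_empty_iff_forall_notMem.2 fun D hD => ?_
      simp only [Set.mem_setOf_eq] at hD
      have hm0 : m = 0 := by
        rw [hm, integral_congr_ae (Filter.Eventually.of_forall hξ0), integral_zero]
      rw [hm0] at hD
      simp [hξ0, ← hB0] at hD
    rw [hset]
    simp
  -- B > 0
  rcases isEmpty_or_nonempty Ω with hΩe | hΩ
  · exact absurd (measure_univ (μ := μ)) (by simp [Set.univ_eq_empty_iff.2 hΩe])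
  have hmB : ‖m‖ ≤ B := by
    have := norm_integral_le_of_norm_le_const (μ := μ) (f := ξ) (C := B)
      (Filter.Eventually.of_forall hbd)
    simpa using this
  have hηbd : ∀ ω, ‖η ω‖ ≤ 2 * B := fun ω => by
    calc ‖ξ ω - m‖ ≤ ‖ξ ω‖ + ‖m‖ := norm_sub_le _ _
      _ ≤ B + B := add_le_add (hbd ω) hmB
      _ = 2 * B := by ring
  have hηmeas : Measurable η := hξ.sub measurable_const
  have hηmean : ∫ ω, η ω ∂μ = 0 := by
    rw [hη]
    have hint : Integrable ξ μ := integrable_of_bdd hξ.aestronglyMeasurable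
      (Filter.Eventually.of_forall hbd)
    rw [integral_sub hint (integrable_const _), integral_const]
    simp [hm]
  set f : (Fin n → Ω) → ℝ := fun D => ‖∑ k, η (D k)‖ with hf
  have hfmeas : Measurable f :=
    (Finset.measurable_sum _ (fun k _ => hηmeas.comp (measurable_pi_apply k))).norm
  have hfK : ∀ D, |f D| ≤ n * (2 * B) := by
    intro D
    rw [abs_of_nonneg (norm_nonneg _)]
    calc ‖∑ k, η (D k)‖ ≤ ∑ k : Fin n, ‖η (D k)‖ := norm_sum_le _ _
      _ ≤ ∑ _k : Fin n, (2 * B) := Finset.sum_le_sum fun k _ => hηbd _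
      _ = n * (2 * B) := by simp [mul_comm]
  have hflip : ∀ (D : Fin n → Ω) (i : Fin n) (z : Ω),
      |f (Function.update D i z) - f D| ≤ 2 * B := by
    intro D i z
    have hsum : (∑ k, η (Function.update D i z k)) = η z + ((∑ k, η (D k)) - η (D i)) := by
      have h1 : ∀ k, η (Function.update D i z k)
          = Function.update (fun j => η (D j)) i (η z) k := by
        intro k
        rcases eq_or_ne k i with rfl | hk
        · simp
        · simp [Function.update_of_ne hk]
      rw [Finset.sum_congr rfl (fun k _ => h1 k),
        Finset.sum_update_of_mem (Finset.mem_univ i), ← Finset.erase_eq,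
        ← Finset.add_sum_erase _ (fun j => η (D j)) (Finset.mem_univ i)]
      abel
    have : f (Function.update D i z) - f D = ‖η z + ((∑ k, η (D k)) - η (D i))‖ - ‖∑ k, η (D k)‖ := by
      rw [hf]; dsimp only; rw [hsum]
    rw [this]
    calc |‖η z + ((∑ k, η (D k)) - η (D i))‖ - ‖∑ k, η (D k)‖|
        ≤ ‖(η z + ((∑ k, η (D k)) - η (D i))) - ∑ k, η (D k)‖ := abs_norm_sub_norm_le _ _
      _ = ‖η z - η (D i)‖ := by congr 1; abel
      _ = ‖ξ z - ξ (D i)‖ := by rw [hη]; congr 1; simp only [sub_sub_sub_cancel_right]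
      _ ≤ ‖ξ z‖ + ‖ξ (D i)‖ := norm_sub_le _ _
      _ ≤ B + B := add_le_add (hbd _) (hbd _)
      _ = 2 * B := by ring
  -- mean of f
  have hfint : Integrable f π := integrable_of_bdd hfmeas.aestronglyMeasurable
    (Filter.Eventually.of_forall fun D => by
      rw [Real.norm_eq_abs]; exact hfK D)
  have hf2int : Integrable (fun D => f D ^ 2) π := by
    refine integrable_of_bdd ((hfmeas.pow_const 2).aestronglyMeasurable)
      (K := (n * (2 * B)) ^ 2) (Filter.Eventually.of_forall fun D => ?_)
    rw [Real.norm_eq_abs, abs_of_nonneg (by positivity)]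
    have h1 := hfK D
    have h0 : 0 ≤ f D := norm_nonneg _
    rw [abs_of_nonneg h0] at h1
    nlinarith
  have hn0 : (0 : ℝ) < n := by exact_mod_cast hn
  have hEf2 : ∫ D, f D ^ 2 ∂π ≤ n * (2 * B) ^ 2 := by
    have := sum_sq_int μ n η (2 * B) hηmeas hηbd hηmean
    exact this
  set a : ℝ := 2 * B * Real.sqrt n with ha
  have ha0 : 0 < a := by
    have : 0 < Real.sqrt n := Real.sqrt_pos.2 hn0
    positivity
  have hEf : ∫ D, f D ∂π ≤ 2 * B * Real.sqrt n := by
    have hpt : ∀ D, f D ≤ f D ^ 2 / (2 * a) + a / 2 := by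
      intro D
      rw [div_add_div _ _ (by positivity) (by norm_num : (2:ℝ) ≠ 0), le_div_iff₀ (by positivity)]
      nlinarith [sq_nonneg (f D - a)]
    have hintrhs : Integrable (fun D => f D ^ 2 / (2 * a) + a / 2) π :=
      (hf2int.div_const _).add (integrable_const _)
    calc ∫ D, f D ∂π ≤ ∫ D, (f D ^ 2 / (2 * a) + a / 2) ∂π :=
          integral_mono hfint hintrhs hpt
      _ = (∫ D, f D ^ 2 ∂π) / (2 * a) + a / 2 := by
          rw [integral_add (hf2int.div_const _) (integrable_const _), integral_div,
            integral_const]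
          simp
      _ ≤ (n * (2 * B) ^ 2) / (2 * a) + a / 2 := by
          have := hEf2
          have h2a : 0 < 2 * a := by positivity
          gcongr
      _ = a := by
          rw [ha]
          rw [div_add_div _ _ (by positivity) (by norm_num : (2:ℝ) ≠ 0)]
          rw [div_eq_iff (by positivity)]
          have hsq : Real.sqrt n * Real.sqrt n = n := Real.mul_self_sqrt hn0.le
          nlinarith [hsq]
      _ = 2 * B * Real.sqrt n := ha
  -- apply tail bound
  set t : ℝ := 4 * B * Real.sqrt (n * Real.log (1 / δ')) with ht
  have ht0 : 0 ≤ t := by positivity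
  have htail := mcdiarmid_tail μ n hn f (n * (2 * B)) (2 * B) (by positivity)
    hfmeas hfK hflip t ht0
  have hsub : {D : Fin n → Ω | 2 * B * Real.sqrt n + t < ‖∑ k, (ξ (D k) - m)‖}
      ⊆ {D | (∫ D', f D' ∂π) + t ≤ f D} := by
    intro D hD
    simp only [Set.mem_setOf_eq] at hD ⊢
    have : f D = ‖∑ k, (ξ (D k) - m)‖ := rfl
    rw [this]
    have := hEf
    linarith
  refine le_trans (measure_mono hsub) (le_trans htail ?_)
  refine ENNReal.ofReal_le_ofReal ?_
  have hcalc : -(t ^ 2) / (4 * n * (2 * B) ^ 2) = -Real.log (1 / δ') := by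
    have hsq : Real.sqrt (n * Real.log (1 / δ')) ^ 2 = n * Real.log (1 / δ') :=
      Real.sq_sqrt (by positivity)
    have h1 : t ^ 2 = 16 * B ^ 2 * (n * Real.log (1 / δ')) := by
      rw [ht, mul_pow, mul_pow, hsq]; ring
    rw [h1, div_eq_iff (by positivity : (0:ℝ) < 4 * n * (2 * B) ^ 2).ne']
    ring
  rw [hcalc, Real.exp_neg, Real.exp_log (by positivity)]
  rw [one_div, inv_inv]

-- ### small algebra helpers
lemma aux_sum_sq_prod {ι κ : Type*} [Fintype ι] [Fintype κ] (x : ι → ℝ) (y : κ → ℝ) :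
    ∑ p : ι × κ, (x p.1 * y p.2) ^ 2 = (∑ i, x i ^ 2) * (∑ j, y j ^ 2) := by
  rw [Fintype.sum_prod_type, Finset.sum_mul_sum]
  exact Finset.sum_congr rfl fun i _ => Finset.sum_congr rfl fun j _ => by ring

lemma aux_sq_sum_sq {τ' : Type*} [Fintype τ'] (M : τ' → ℝ) :
    ∑ q : τ' × τ', (M q.1 * M q.2) ^ 2 = (∑ p, M p ^ 2) ^ 2 := by
  rw [Fintype.sum_prod_type, sq, Finset.sum_mul_sum]
  exact Finset.sum_congr rfl fun i _ => Finset.sum_congr rfl fun j _ => by ring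

lemma abs_apply_le_norm2 {d : ℕ} (x : Fin d → ℝ) (i : Fin d) : |x i| ≤ norm2 x := by
  rw [norm2, ← Real.sqrt_sq_eq_abs]
  exact Real.sqrt_le_sqrt (Finset.single_le_sum (f := fun j => x j ^ 2) (fun j _ => sq_nonneg _) (Finset.mem_univ i))

lemma norm2_nonneg {d : ℕ} (x : Fin d → ℝ) : 0 ≤ norm2 x := Real.sqrt_nonneg _

lemma sum_sq_eq_norm2_sq {d : ℕ} (x : Fin d → ℝ) : ∑ i, x i ^ 2 = norm2 x ^ 2 :=
  (Real.sq_sqrt (Finset.sum_nonneg fun i _ => sq_nonneg _)).symm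

lemma euclid_component_le {ι : Type*} [Fintype ι] (v : EuclideanSpace ℝ ι) (p : ι) :
    |v p| ≤ ‖v‖ := by
  rw [EuclideanSpace.norm_eq, ← Real.sqrt_sq_eq_abs]
  refine Real.sqrt_le_sqrt ?_
  have := Finset.single_le_sum (f := fun i => ‖v i‖ ^ 2)
    (fun j _ => sq_nonneg _) (Finset.mem_univ p)
  simpa [Real.norm_eq_abs, sq_abs] using this

-- ### the feature maps
def phiV {d L : ℕ} (g : ℝ → ℝ) (z z' : Pt d L) : EuclideanSpace ℝ (Fin d × Fin d) :=
  WithLp.toLp 2 fun p : Fin d × Fin d => g (ipY z.2 z'.2) * ipY z.2 z'.2 * (z.1 p.1 * z'.1 p.2)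

def phiW {d L : ℕ} (g : ℝ → ℝ) (z z' : Pt d L) :
    EuclideanSpace ℝ ((Fin d × Fin d) × (Fin d × Fin d)) :=
  WithLp.toLp 2 fun q : (Fin d × Fin d) × (Fin d × Fin d) =>
    g (ipY z.2 z'.2) * ((z.1 q.1.1 * z'.1 q.1.2) * (z.1 q.2.1 * z'.1 q.2.2))

def c0F {d L : ℕ} (g : ℝ → ℝ) (P : Measure (Pt d L)) (z' : Pt d L) : ℝ :=
  ∫ z, g (ipY z.2 z'.2) * ipY z.2 z'.2 ^ 2 ∂P

def vVF {d L : ℕ} (g : ℝ → ℝ) (P : Measure (Pt d L)) (z' : Pt d L) :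
    EuclideanSpace ℝ (Fin d × Fin d) := ∫ z, phiV g z z' ∂P

def vWF {d L : ℕ} (g : ℝ → ℝ) (P : Measure (Pt d L)) (z' : Pt d L) :
    EuclideanSpace ℝ ((Fin d × Fin d) × (Fin d × Fin d)) := ∫ z, phiW g z z' ∂P

-- ### pointwise expansion of the loss
lemma loss_expand {d L : ℕ} (g : ℝ → ℝ) (lam : ℝ) (A : Matrix (Fin d) (Fin d) ℝ)
    (z z' : Pt d L) :
    lossFn g lam A z z' = g (ipY z.2 z'.2) * ipY z.2 z'.2 ^ 2
      - 2 * (∑ p : Fin d × Fin d, A p.1 p.2 * phiV g z z' p)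
      + (∑ q : (Fin d × Fin d) × (Fin d × Fin d),
          A q.1.1 q.1.2 * A q.2.1 q.2.2 * phiW g z z' q)
      + lam * A.trace := by
  have hq : qForm A z.1 z'.1
      = ∑ p : Fin d × Fin d, A p.1 p.2 * (z.1 p.1 * z'.1 p.2) := by
    rw [qForm, Fintype.sum_prod_type]
    exact Finset.sum_congr rfl fun i _ => Finset.sum_congr rfl fun j _ => by ring
  have h1 : (∑ p : Fin d × Fin d, A p.1 p.2 * phiV g z z' p)
      = g (ipY z.2 z'.2) * ipY z.2 z'.2 * qForm A z.1 z'.1 := by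
    rw [hq, Finset.mul_sum]
    exact Finset.sum_congr rfl fun p _ => by rw [phiV, PiLp.toLp_apply]; ring
  have h2 : (∑ q : (Fin d × Fin d) × (Fin d × Fin d),
        A q.1.1 q.1.2 * A q.2.1 q.2.2 * phiW g z z' q)
      = g (ipY z.2 z'.2) * qForm A z.1 z'.1 ^ 2 := by
    rw [hq, sq, Finset.sum_mul_sum, Finset.mul_sum, Fintype.sum_prod_type]
    refine Finset.sum_congr rfl fun p _ => ?_
    rw [Finset.mul_sum]
    exact Finset.sum_congr rfl fun p' _ => by rw [phiW, PiLp.toLp_apply]; ring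
  rw [h1, h2, lossFn]
  ring

-- loss symmetry for symmetric matrices
lemma ipY_comm {L : ℕ} (y y' : Fin L → ℝ) : ipY y y' = ipY y' y := by
  rw [ipY, ipY]
  exact Finset.sum_congr rfl fun i _ => mul_comm _ _

lemma qForm_comm {d : ℕ} {A : Matrix (Fin d) (Fin d) ℝ} (hA : A.IsHermitian)
    (x x' : Fin d → ℝ) : qForm A x x' = qForm A x' x := by
  rw [qForm, qForm, Finset.sum_comm]
  refine Finset.sum_congr rfl fun j _ => Finset.sum_congr rfl fun i _ => ?_
  have := hA.apply j i
  simp only [RCLike.star_def, starRingEnd_apply, star_trivial] at this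
  rw [← this]
  ring

lemma loss_symm {d L : ℕ} (g : ℝ → ℝ) (lam : ℝ) {A : Matrix (Fin d) (Fin d) ℝ}
    (hA : A.IsHermitian) (z z' : Pt d L) :
    lossFn g lam A z z' = lossFn g lam A z' z := by
  rw [lossFn, lossFn, ipY_comm, qForm_comm hA]

-- ### measurability helpers
lemma meas_ip_pair {d L : ℕ} : Measurable (fun w : Pt d L × Pt d L => ipY w.1.2 w.2.2) := by
  unfold ipY
  exact Finset.measurable_sum _ fun i _ =>
    ((measurable_pi_apply i).comp (measurable_snd.comp measurable_fst)).mul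
      ((measurable_pi_apply i).comp (measurable_snd.comp measurable_snd))

lemma meas_ip_left {d L : ℕ} (z' : Pt d L) :
    Measurable (fun z : Pt d L => ipY z.2 z'.2) := by
  unfold ipY
  exact Finset.measurable_sum _ fun i _ =>
    ((measurable_pi_apply i).comp measurable_snd).mul measurable_const

lemma meas_phiV_pair {d L : ℕ} {g : ℝ → ℝ} (hg : Measurable g) :
    Measurable (fun w : Pt d L × Pt d L => phiV g w.1 w.2) := by
  refine (WithLp.measurable_toLp 2 _).comp (measurable_pi_lambda _ (fun p => ?_))
  refine (((hg.comp meas_ip_pair).mul meas_ip_pair).mul ?_)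
  exact ((measurable_pi_apply p.1).comp (measurable_fst.comp measurable_fst)).mul
    ((measurable_pi_apply p.2).comp (measurable_fst.comp measurable_snd))

lemma meas_phiW_pair {d L : ℕ} {g : ℝ → ℝ} (hg : Measurable g) :
    Measurable (fun w : Pt d L × Pt d L => phiW g w.1 w.2) := by
  refine (WithLp.measurable_toLp 2 _).comp (measurable_pi_lambda _ (fun q => ?_))
  refine ((hg.comp meas_ip_pair).mul ?_)
  refine Measurable.mul ?_ ?_
  · exact ((measurable_pi_apply q.1.1).comp (measurable_fst.comp measurable_fst)).mul
      ((measurable_pi_apply q.1.2).comp (measurable_fst.comp measurable_snd))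
  · exact ((measurable_pi_apply q.2.1).comp (measurable_fst.comp measurable_fst)).mul
      ((measurable_pi_apply q.2.2).comp (measurable_fst.comp measurable_snd))

lemma meas_phiV_left {d L : ℕ} {g : ℝ → ℝ} (hg : Measurable g) (z' : Pt d L) :
    Measurable (fun z : Pt d L => phiV g z z') :=
  (meas_phiV_pair hg).comp (measurable_id.prodMk measurable_const)

lemma meas_phiW_left {d L : ℕ} {g : ℝ → ℝ} (hg : Measurable g) (z' : Pt d L) :
    Measurable (fun z : Pt d L => phiW g z z') :=
  (meas_phiW_pair hg).comp (measurable_id.prodMk measurable_const)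

-- ### norm bounds on the feature maps
lemma norm_phiV_le {d L : ℕ} {g : ℝ → ℝ} (hgb : ∀ t, 0 ≤ g t ∧ g t ≤ 1)
    {z z' : Pt d L} {R Lbar : ℝ} (hR : 0 ≤ R) (hLb : 0 ≤ Lbar)
    (ht0 : 0 ≤ ipY z.2 z'.2) (htL : ipY z.2 z'.2 ≤ Lbar)
    (hx : norm2 z.1 ≤ R) (hx' : norm2 z'.1 ≤ R) :
    ‖phiV g z z'‖ ≤ Lbar * R ^ 2 := by
  set t := ipY z.2 z'.2 with htdef
  have hgt := hgb t
  rw [EuclideanSpace.norm_eq]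
  have hs : ∑ p : Fin d × Fin d, ‖phiV g z z' p‖ ^ 2
      = (g t * t) ^ 2 * ((∑ i, z.1 i ^ 2) * (∑ j, z'.1 j ^ 2)) := by
    rw [← aux_sum_sq_prod, Finset.mul_sum]
    refine Finset.sum_congr rfl fun p _ => ?_
    rw [phiV, PiLp.toLp_apply, Real.norm_eq_abs, sq_abs]
    ring
  rw [hs]
  have h1 : (g t * t) ^ 2 * ((∑ i, z.1 i ^ 2) * (∑ j, z'.1 j ^ 2)) ≤ (Lbar * R ^ 2) ^ 2 := by
    have e1 : ∑ i, z.1 i ^ 2 = norm2 z.1 ^ 2 := sum_sq_eq_norm2_sq _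
    have e2 : ∑ j, z'.1 j ^ 2 = norm2 z'.1 ^ 2 := sum_sq_eq_norm2_sq _
    rw [e1, e2]
    have hn1 := norm2_nonneg z.1
    have hn2 := norm2_nonneg z'.1
    have hgt1 : 0 ≤ g t * t := mul_nonneg hgt.1 ht0
    have hgt2 : g t * t ≤ Lbar := le_trans (mul_le_of_le_one_left ht0 hgt.2) htL
    have hb : norm2 z.1 ^ 2 ≤ R ^ 2 := pow_le_pow_left₀ hn1 hx 2
    have hc : norm2 z'.1 ^ 2 ≤ R ^ 2 := pow_le_pow_left₀ hn2 hx' 2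
    have ha : (g t * t) ^ 2 ≤ Lbar ^ 2 := pow_le_pow_left₀ hgt1 hgt2 2
    have hbc : norm2 z.1 ^ 2 * norm2 z'.1 ^ 2 ≤ R ^ 2 * R ^ 2 :=
      mul_le_mul hb hc (by positivity) (by positivity)
    calc (g t * t) ^ 2 * (norm2 z.1 ^ 2 * norm2 z'.1 ^ 2)
        ≤ Lbar ^ 2 * (R ^ 2 * R ^ 2) :=
          mul_le_mul ha hbc (by positivity) (by positivity)
      _ = (Lbar * R ^ 2) ^ 2 := by ring
  calc Real.sqrt ((g t * t) ^ 2 * ((∑ i, z.1 i ^ 2) * (∑ j, z'.1 j ^ 2)))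
      ≤ Real.sqrt ((Lbar * R ^ 2) ^ 2) := Real.sqrt_le_sqrt h1
    _ = Lbar * R ^ 2 := Real.sqrt_sq (by positivity)

lemma norm_phiW_le {d L : ℕ} {g : ℝ → ℝ} (hgb : ∀ t, 0 ≤ g t ∧ g t ≤ 1)
    {z z' : Pt d L} {R : ℝ} (hR : 0 ≤ R)
    (hx : norm2 z.1 ≤ R) (hx' : norm2 z'.1 ≤ R) :
    ‖phiW g z z'‖ ≤ R ^ 4 := by
  set t := ipY z.2 z'.2 with htdef
  have hgt := hgb t
  rw [EuclideanSpace.norm_eq]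
  have hs : ∑ q : (Fin d × Fin d) × (Fin d × Fin d), ‖phiW g z z' q‖ ^ 2
      = (g t) ^ 2 * ((∑ i, z.1 i ^ 2) * (∑ j, z'.1 j ^ 2)) ^ 2 := by
    rw [← aux_sum_sq_prod, ← aux_sq_sum_sq (fun p : Fin d × Fin d => z.1 p.1 * z'.1 p.2),
      Finset.mul_sum]
    refine Finset.sum_congr rfl fun q _ => ?_
    rw [phiW, PiLp.toLp_apply, Real.norm_eq_abs, sq_abs]
    ring
  rw [hs]
  have h1 : (g t) ^ 2 * ((∑ i, z.1 i ^ 2) * (∑ j, z'.1 j ^ 2)) ^ 2 ≤ (R ^ 4) ^ 2 := by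
    have e1 : ∑ i, z.1 i ^ 2 = norm2 z.1 ^ 2 := sum_sq_eq_norm2_sq _
    have e2 : ∑ j, z'.1 j ^ 2 = norm2 z'.1 ^ 2 := sum_sq_eq_norm2_sq _
    rw [e1, e2]
    have hn1 := norm2_nonneg z.1
    have hn2 := norm2_nonneg z'.1
    have hb : norm2 z.1 ^ 2 ≤ R ^ 2 := pow_le_pow_left₀ hn1 hx 2
    have hc : norm2 z'.1 ^ 2 ≤ R ^ 2 := pow_le_pow_left₀ hn2 hx' 2
    have hbc : norm2 z.1 ^ 2 * norm2 z'.1 ^ 2 ≤ R ^ 2 * R ^ 2 :=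
      mul_le_mul hb hc (by positivity) (by positivity)
    have hbc2 : (norm2 z.1 ^ 2 * norm2 z'.1 ^ 2) ^ 2 ≤ (R ^ 2 * R ^ 2) ^ 2 :=
      pow_le_pow_left₀ (by positivity) hbc 2
    have ha : (g t) ^ 2 ≤ 1 := by
      have := pow_le_pow_left₀ hgt.1 hgt.2 2
      simpa using this
    calc (g t) ^ 2 * ((norm2 z.1 ^ 2) * (norm2 z'.1 ^ 2)) ^ 2
        ≤ 1 * (R ^ 2 * R ^ 2) ^ 2 :=
          mul_le_mul ha hbc2 (by positivity) (by positivity)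
      _ = (R ^ 4) ^ 2 := by ring
  calc Real.sqrt ((g t) ^ 2 * ((∑ i, z.1 i ^ 2) * (∑ j, z'.1 j ^ 2)) ^ 2)
      ≤ Real.sqrt ((R ^ 4) ^ 2) := Real.sqrt_le_sqrt h1
    _ = R ^ 4 := Real.sqrt_sq (by positivity)

section Main
variable {d L : ℕ} {g : ℝ → ℝ} {P : Measure (Pt d L)} [IsProbabilityMeasure P]
  {S : Set (Pt d L)} {R Lbar : ℝ}

lemma ae_mem_S (hSm : MeasurableSet S) (hS1 : P S = 1) : ∀ᵐ z ∂P, z ∈ S := by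
  have hc : P Sᶜ = 0 := by
    rw [measure_compl hSm (measure_ne_top _ _), hS1, measure_univ, tsub_self]
  rw [MeasureTheory.ae_iff]
  simpa [Set.compl_def] using hc

lemma integrable_loss0 (hg : Measurable g) (hgb : ∀ t, 0 ≤ g t ∧ g t ≤ 1)
    (hSm : MeasurableSet S) (hS1 : P S = 1)
    (hSp : ∀ z ∈ S, ∀ z' ∈ S, 0 ≤ ipY z.2 z'.2 ∧ ipY z.2 z'.2 ≤ Lbar)
    {z' : Pt d L} (hz' : z' ∈ S) :
    Integrable (fun z => g (ipY z.2 z'.2) * ipY z.2 z'.2 ^ 2) P := by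
  refine Integrable.mono' (integrable_const (Lbar ^ 2))
    (((hg.comp (meas_ip_left z')).mul ((meas_ip_left z').pow_const 2)).aestronglyMeasurable)
    ((ae_mem_S hSm hS1).mono fun z hz => ?_)
  have h := hSp z hz z' hz'
  have hgt := hgb (ipY z.2 z'.2)
  rw [Real.norm_eq_abs, abs_of_nonneg (mul_nonneg hgt.1 (sq_nonneg _))]
  have h2 : ipY z.2 z'.2 ^ 2 ≤ Lbar ^ 2 := pow_le_pow_left₀ h.1 h.2 2
  calc g (ipY z.2 z'.2) * ipY z.2 z'.2 ^ 2 ≤ 1 * ipY z.2 z'.2 ^ 2 :=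
        mul_le_mul_of_nonneg_right hgt.2 (sq_nonneg _)
    _ ≤ Lbar ^ 2 := by rw [one_mul]; exact h2

lemma integrable_phiV (hg : Measurable g) (hgb : ∀ t, 0 ≤ g t ∧ g t ≤ 1)
    (hSm : MeasurableSet S) (hS1 : P S = 1)
    (hSR : ∀ z ∈ S, norm2 z.1 ≤ R)
    (hSp : ∀ z ∈ S, ∀ z' ∈ S, 0 ≤ ipY z.2 z'.2 ∧ ipY z.2 z'.2 ≤ Lbar)
    (hR : 0 ≤ R) (hLb : 0 ≤ Lbar) {z' : Pt d L} (hz' : z' ∈ S) :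
    Integrable (fun z => phiV g z z') P := by
  refine Integrable.mono' (integrable_const (Lbar * R ^ 2))
    (meas_phiV_left hg z').aestronglyMeasurable
    ((ae_mem_S hSm hS1).mono fun z hz => ?_)
  exact norm_phiV_le hgb hR hLb (hSp z hz z' hz').1 (hSp z hz z' hz').2 (hSR z hz) (hSR z' hz')

lemma integrable_phiW (hg : Measurable g) (hgb : ∀ t, 0 ≤ g t ∧ g t ≤ 1)
    (hSm : MeasurableSet S) (hS1 : P S = 1)
    (hSR : ∀ z ∈ S, norm2 z.1 ≤ R) (hR : 0 ≤ R) {z' : Pt d L} (hz' : z' ∈ S) :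
    Integrable (fun z => phiW g z z') P := by
  refine Integrable.mono' (integrable_const (R ^ 4))
    (meas_phiW_left hg z').aestronglyMeasurable
    ((ae_mem_S hSm hS1).mono fun z hz => ?_)
  exact norm_phiW_le hgb hR (hSR z hz) (hSR z' hz')

lemma integral_loss_eq (hg : Measurable g) (hgb : ∀ t, 0 ≤ g t ∧ g t ≤ 1)
    (hSm : MeasurableSet S) (hS1 : P S = 1)
    (hSR : ∀ z ∈ S, norm2 z.1 ≤ R)
    (hSp : ∀ z ∈ S, ∀ z' ∈ S, 0 ≤ ipY z.2 z'.2 ∧ ipY z.2 z'.2 ≤ Lbar)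
    (hR : 0 ≤ R) (hLb : 0 ≤ Lbar) (lam : ℝ) (A : Matrix (Fin d) (Fin d) ℝ)
    {z' : Pt d L} (hz' : z' ∈ S) :
    ∫ z, lossFn g lam A z z' ∂P
      = c0F g P z' - 2 * (∑ p : Fin d × Fin d, A p.1 p.2 * vVF g P z' p)
        + (∑ q : (Fin d × Fin d) × (Fin d × Fin d),
            A q.1.1 q.1.2 * A q.2.1 q.2.2 * vWF g P z' q)
        + lam * A.trace := by
  have int0 := integrable_loss0 hg hgb hSm hS1 hSp hz'
  have intV := integrable_phiV hg hgb hSm hS1 hSR hSp hR hLb hz'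
  have intW := integrable_phiW hg hgb hSm hS1 hSR hR hz'
  have intVp : ∀ p : Fin d × Fin d, Integrable (fun z => phiV g z z' p) P := by
    intro p
    refine Integrable.mono' (integrable_const (Lbar * R ^ 2))
      (((measurable_pi_apply p).comp ((WithLp.measurable_ofLp 2 _).comp (meas_phiV_left hg z'))).aestronglyMeasurable)
      ((ae_mem_S hSm hS1).mono fun z hz => ?_)
    rw [Real.norm_eq_abs]
    exact le_trans (euclid_component_le _ p)
      (norm_phiV_le hgb hR hLb (hSp z hz z' hz').1 (hSp z hz z' hz').2 (hSR z hz) (hSR z' hz'))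
  have intWq : ∀ q : (Fin d × Fin d) × (Fin d × Fin d),
      Integrable (fun z => phiW g z z' q) P := by
    intro q
    refine Integrable.mono' (integrable_const (R ^ 4))
      (((measurable_pi_apply q).comp ((WithLp.measurable_ofLp 2 _).comp (meas_phiW_left hg z'))).aestronglyMeasurable)
      ((ae_mem_S hSm hS1).mono fun z hz => ?_)
    rw [Real.norm_eq_abs]
    exact le_trans (euclid_component_le _ q) (norm_phiW_le hgb hR (hSR z hz) (hSR z' hz'))
  have hprojV : ∀ p, ∫ z, phiV g z z' p ∂P = vVF g P z' p := by
    intro p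
    have h := ContinuousLinearMap.integral_comp_comm (EuclideanSpace.proj p (𝕜 := ℝ)) intV
    simpa [vVF] using h
  have hprojW : ∀ q, ∫ z, phiW g z z' q ∂P = vWF g P z' q := by
    intro q
    have h := ContinuousLinearMap.integral_comp_comm (EuclideanSpace.proj q (𝕜 := ℝ)) intW
    simpa [vWF] using h
  have intT1 : Integrable (fun z => 2 * ∑ p : Fin d × Fin d, A p.1 p.2 * phiV g z z' p) P :=
    (integrable_finset_sum _ fun p _ => (intVp p).const_mul _).const_mul 2
  have intT2 : Integrable (fun z => ∑ q : (Fin d × Fin d) × (Fin d × Fin d),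
      A q.1.1 q.1.2 * A q.2.1 q.2.2 * phiW g z z' q) P :=
    integrable_finset_sum _ fun q _ => (intWq q).const_mul _
  rw [integral_congr_ae (Filter.Eventually.of_forall fun z => loss_expand g lam A z z')]
  have intA : Integrable (fun z => g (ipY z.2 z'.2) * ipY z.2 z'.2 ^ 2
      - 2 * ∑ p : Fin d × Fin d, A p.1 p.2 * phiV g z z' p) P := int0.sub intT1
  have intB : Integrable (fun z => g (ipY z.2 z'.2) * ipY z.2 z'.2 ^ 2
      - 2 * ∑ p : Fin d × Fin d, A p.1 p.2 * phiV g z z' p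
      + ∑ q : (Fin d × Fin d) × (Fin d × Fin d),
          A q.1.1 q.1.2 * A q.2.1 q.2.2 * phiW g z z' q) P := intA.add intT2
  rw [integral_add intB (integrable_const _),
    integral_add intA intT2, integral_sub int0 intT1, integral_const]
  have h1 : ∫ z, (2 * ∑ p : Fin d × Fin d, A p.1 p.2 * phiV g z z' p) ∂P
      = 2 * ∑ p : Fin d × Fin d, A p.1 p.2 * vVF g P z' p := by
    rw [integral_const_mul, integral_finset_sum _ (fun p _ => (intVp p).const_mul _)]
    congr 1
    refine Finset.sum_congr rfl fun p _ => ?_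
    rw [integral_const_mul, hprojV p]
  have h2 : ∫ z, (∑ q : (Fin d × Fin d) × (Fin d × Fin d),
        A q.1.1 q.1.2 * A q.2.1 q.2.2 * phiW g z z' q) ∂P
      = ∑ q : (Fin d × Fin d) × (Fin d × Fin d),
          A q.1.1 q.1.2 * A q.2.1 q.2.2 * vWF g P z' q := by
    rw [integral_finset_sum _ (fun q _ => (intWq q).const_mul _)]
    refine Finset.sum_congr rfl fun q _ => ?_
    rw [integral_const_mul, hprojW q]
  rw [h1, h2]
  simp only [measure_univ, probReal_univ, ENNReal.toReal_one, one_smul, smul_eq_mul, one_mul, c0F]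

lemma c0F_bound (hg : Measurable g) (hgb : ∀ t, 0 ≤ g t ∧ g t ≤ 1)
    (hSm : MeasurableSet S) (hS1 : P S = 1)
    (hSp : ∀ z ∈ S, ∀ z' ∈ S, 0 ≤ ipY z.2 z'.2 ∧ ipY z.2 z'.2 ≤ Lbar)
    {z' : Pt d L} (hz' : z' ∈ S) : |c0F g P z'| ≤ Lbar ^ 2 := by
  have := norm_integral_le_of_norm_le_const (μ := P)
    (f := fun z => g (ipY z.2 z'.2) * ipY z.2 z'.2 ^ 2) (C := Lbar ^ 2)
    (((ae_mem_S hSm hS1)).mono fun z hz => by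
      have h := hSp z hz z' hz'
      have hgt := hgb (ipY z.2 z'.2)
      rw [Real.norm_eq_abs, abs_of_nonneg (mul_nonneg hgt.1 (sq_nonneg _))]
      have h2 : ipY z.2 z'.2 ^ 2 ≤ Lbar ^ 2 := pow_le_pow_left₀ h.1 h.2 2
      calc g (ipY z.2 z'.2) * ipY z.2 z'.2 ^ 2 ≤ 1 * ipY z.2 z'.2 ^ 2 :=
            mul_le_mul_of_nonneg_right hgt.2 (sq_nonneg _)
        _ ≤ Lbar ^ 2 := by rw [one_mul]; exact h2)
  simpa [c0F] using this

lemma vVF_bound (hg : Measurable g) (hgb : ∀ t, 0 ≤ g t ∧ g t ≤ 1)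
    (hSm : MeasurableSet S) (hS1 : P S = 1)
    (hSR : ∀ z ∈ S, norm2 z.1 ≤ R)
    (hSp : ∀ z ∈ S, ∀ z' ∈ S, 0 ≤ ipY z.2 z'.2 ∧ ipY z.2 z'.2 ≤ Lbar)
    (hR : 0 ≤ R) (hLb : 0 ≤ Lbar) {z' : Pt d L} (hz' : z' ∈ S) :
    ‖vVF g P z'‖ ≤ Lbar * R ^ 2 := by
  have := norm_integral_le_of_norm_le_const (μ := P)
    (f := fun z => phiV g z z') (C := Lbar * R ^ 2)
    (((ae_mem_S hSm hS1)).mono fun z hz =>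
      norm_phiV_le hgb hR hLb (hSp z hz z' hz').1 (hSp z hz z' hz').2 (hSR z hz) (hSR z' hz'))
  simpa [vVF] using this

lemma vWF_bound (hg : Measurable g) (hgb : ∀ t, 0 ≤ g t ∧ g t ≤ 1)
    (hSm : MeasurableSet S) (hS1 : P S = 1)
    (hSR : ∀ z ∈ S, norm2 z.1 ≤ R) (hR : 0 ≤ R) {z' : Pt d L} (hz' : z' ∈ S) :
    ‖vWF g P z'‖ ≤ R ^ 4 := by
  have := norm_integral_le_of_norm_le_const (μ := P)
    (f := fun z => phiW g z z') (C := R ^ 4)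
    (((ae_mem_S hSm hS1)).mono fun z hz => norm_phiW_le hgb hR (hSR z hz) (hSR z' hz'))
  simpa [vWF] using this

lemma meas_c0F (hg : Measurable g) : Measurable (c0F g P) := by
  have h : StronglyMeasurable (fun w : Pt d L × Pt d L =>
      g (ipY w.1.2 w.2.2) * ipY w.1.2 w.2.2 ^ 2) :=
    ((hg.comp meas_ip_pair).mul (meas_ip_pair.pow_const 2)).stronglyMeasurable
  exact h.integral_prod_left'.measurable

lemma meas_vVF (hg : Measurable g) : Measurable (vVF g P) :=
  ((meas_phiV_pair (d := d) (L := L) hg).stronglyMeasurable.integral_prod_left').measurable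

lemma meas_vWF (hg : Measurable g) : Measurable (vWF g P) :=
  ((meas_phiW_pair (d := d) (L := L) hg).stronglyMeasurable.integral_prod_left').measurable

end Main

def matE {d : ℕ} (A : Matrix (Fin d) (Fin d) ℝ) : EuclideanSpace ℝ (Fin d × Fin d) :=
  WithLp.toLp 2 fun p : Fin d × Fin d => A p.1 p.2

def matE2 {d : ℕ} (A : Matrix (Fin d) (Fin d) ℝ) :
    EuclideanSpace ℝ ((Fin d × Fin d) × (Fin d × Fin d)) :=
  WithLp.toLp 2 fun q : (Fin d × Fin d) × (Fin d × Fin d) => A q.1.1 q.1.2 * A q.2.1 q.2.2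

lemma frobE_norm {d : ℕ} (A : Matrix (Fin d) (Fin d) ℝ) :
    ‖matE A‖ = frobNorm A := by
  unfold matE
  rw [EuclideanSpace.norm_eq]
  simp only [PiLp.toLp_apply]
  rw [frobNorm, Fintype.sum_prod_type]
  congr 1
  exact Finset.sum_congr rfl fun i _ => Finset.sum_congr rfl fun j _ => by
    rw [Real.norm_eq_abs, sq_abs]

lemma frobE2_norm {d : ℕ} (A : Matrix (Fin d) (Fin d) ℝ) :
    ‖matE2 A‖ = frobNorm A ^ 2 := by
  unfold matE2
  rw [EuclideanSpace.norm_eq]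
  simp only [PiLp.toLp_apply]
  have h : ∑ q : (Fin d × Fin d) × (Fin d × Fin d), ‖A q.1.1 q.1.2 * A q.2.1 q.2.2‖ ^ 2
      = (∑ p : Fin d × Fin d, (A p.1 p.2) ^ 2) ^ 2 := by
    rw [← aux_sq_sum_sq (fun p : Fin d × Fin d => A p.1 p.2)]
    exact Finset.sum_congr rfl fun q _ => by rw [Real.norm_eq_abs, sq_abs]
  rw [h, Real.sqrt_sq (Finset.sum_nonneg fun p _ => sq_nonneg _), frobNorm,
    Fintype.sum_prod_type]
  exact (Real.sq_sqrt (Finset.sum_nonneg fun i _ => Finset.sum_nonneg fun j _ => sq_nonneg _)).symm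

lemma abs_sum_mul_le {ι : Type*} [Fintype ι] (a w : EuclideanSpace ℝ ι) :
    |∑ p, a p * w p| ≤ ‖a‖ * ‖w‖ := by
  have h : (inner ℝ a w : ℝ) = ∑ p, a p * w p := by
    rw [PiLp.inner_apply]
    exact Finset.sum_congr rfl fun p _ => by simp [RCLike.inner_apply, mul_comm]
  rw [← h]
  exact abs_real_inner_le_norm a w

lemma arith_bound {n : ℕ} (hn : 1 ≤ n) {δ : ℝ} (hδ0 : 0 < δ) (hδ1 : δ < 1) :
    (2 * Real.sqrt n + 4 * Real.sqrt (n * Real.log (1 / (δ / 3)))) / n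
      ≤ 10 * Real.sqrt ((1 + Real.log (1 / δ)) / n) := by
  set Lg := Real.log (1 / δ) with hLg
  have hL0 : 0 ≤ Lg := Real.log_nonneg (by rw [le_div_iff₀ hδ0]; linarith)
  have hn0 : (0 : ℝ) < n := by exact_mod_cast hn
  have hlog3 : Real.log (1 / (δ / 3)) = Real.log 3 + Lg := by
    have h : 1 / (δ / 3) = 3 * (1 / δ) := by field_simp
    rw [h, Real.log_mul (by norm_num) (by positivity)]
  have h3 : Real.log 3 ≤ 2 := by
    have := Real.log_le_sub_one_of_pos (by norm_num : (0:ℝ) < 3)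
    linarith
  have hstep1 : Real.sqrt (n * Real.log (1 / (δ / 3)))
      ≤ Real.sqrt (2 * (n * (1 + Lg))) := by
    refine Real.sqrt_le_sqrt ?_
    rw [hlog3]
    nlinarith
  have hsqrt2 : Real.sqrt 2 ≤ 1.5 := by
    rw [show (1.5 : ℝ) = Real.sqrt (1.5 ^ 2) by rw [Real.sqrt_sq] <;> norm_num]
    exact Real.sqrt_le_sqrt (by norm_num)
  have hstep2 : Real.sqrt (2 * (n * (1 + Lg)))
      = Real.sqrt 2 * Real.sqrt (n * (1 + Lg)) := Real.sqrt_mul (by norm_num) _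
  have hmono : Real.sqrt n ≤ Real.sqrt (n * (1 + Lg)) :=
    Real.sqrt_le_sqrt (by nlinarith)
  have hnn : 0 ≤ Real.sqrt (n * (1 + Lg)) := Real.sqrt_nonneg _
  have hnum : 2 * Real.sqrt n + 4 * Real.sqrt (n * Real.log (1 / (δ / 3)))
      ≤ 8 * Real.sqrt (n * (1 + Lg)) := by
    have h4 : 4 * Real.sqrt (n * Real.log (1 / (δ / 3)))
        ≤ 6 * Real.sqrt (n * (1 + Lg)) := by
      calc 4 * Real.sqrt (n * Real.log (1 / (δ / 3)))
          ≤ 4 * (Real.sqrt 2 * Real.sqrt (n * (1 + Lg))) := by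
            rw [← hstep2]; linarith
        _ ≤ 6 * Real.sqrt (n * (1 + Lg)) := by nlinarith
    linarith
  have hdiv : Real.sqrt (n * (1 + Lg)) / n = Real.sqrt ((1 + Lg) / n) := by
    rw [Real.sqrt_div (by linarith), Real.sqrt_mul hn0.le]
    have hs0 : 0 < Real.sqrt n := Real.sqrt_pos.2 hn0
    rw [div_eq_div_iff hn0.ne' hs0.ne']
    linear_combination Real.sqrt (1 + Lg) * (Real.mul_self_sqrt hn0.le)
  calc (2 * Real.sqrt n + 4 * Real.sqrt (n * Real.log (1 / (δ / 3)))) / n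
      ≤ 8 * Real.sqrt (n * (1 + Lg)) / n := by gcongr
    _ = 8 * (Real.sqrt (n * (1 + Lg)) / n) := by ring
    _ = 8 * Real.sqrt ((1 + Lg) / n) := by rw [hdiv]
    _ ≤ 10 * Real.sqrt ((1 + Lg) / n) := by nlinarith [Real.sqrt_nonneg ((1 + Lg) / n)]

section Main2
variable {d L : ℕ} {g : ℝ → ℝ} {P : Measure (Pt d L)} [IsProbabilityMeasure P]
  {S : Set (Pt d L)} {R Lbar : ℝ}

lemma c0I_bound (hg : Measurable g) (hgb : ∀ t, 0 ≤ g t ∧ g t ≤ 1)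
    (hSm : MeasurableSet S) (hS1 : P S = 1)
    (hSp : ∀ z ∈ S, ∀ z' ∈ S, 0 ≤ ipY z.2 z'.2 ∧ ipY z.2 z'.2 ≤ Lbar) (hLb : 0 ≤ Lbar) :
    ∀ z', ‖S.indicator (c0F g P) z'‖ ≤ Lbar ^ 2 := by
  intro z'
  by_cases h : z' ∈ S
  · rw [Set.indicator_of_mem h, Real.norm_eq_abs]
    exact c0F_bound hg hgb hSm hS1 hSp h
  · rw [Set.indicator_of_notMem h]
    simp only [norm_zero]
    positivity

lemma vVI_bound (hg : Measurable g) (hgb : ∀ t, 0 ≤ g t ∧ g t ≤ 1)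
    (hSm : MeasurableSet S) (hS1 : P S = 1) (hSR : ∀ z ∈ S, norm2 z.1 ≤ R)
    (hSp : ∀ z ∈ S, ∀ z' ∈ S, 0 ≤ ipY z.2 z'.2 ∧ ipY z.2 z'.2 ≤ Lbar)
    (hR : 0 ≤ R) (hLb : 0 ≤ Lbar) :
    ∀ z', ‖S.indicator (vVF g P) z'‖ ≤ Lbar * R ^ 2 := by
  intro z'
  by_cases h : z' ∈ S
  · rw [Set.indicator_of_mem h]
    exact vVF_bound hg hgb hSm hS1 hSR hSp hR hLb h
  · rw [Set.indicator_of_notMem h]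
    simp only [norm_zero]
    positivity

lemma vWI_bound (hg : Measurable g) (hgb : ∀ t, 0 ≤ g t ∧ g t ≤ 1)
    (hSm : MeasurableSet S) (hS1 : P S = 1) (hSR : ∀ z ∈ S, norm2 z.1 ≤ R) (hR : 0 ≤ R) :
    ∀ z', ‖S.indicator (vWF g P) z'‖ ≤ R ^ 4 := by
  intro z'
  by_cases h : z' ∈ S
  · rw [Set.indicator_of_mem h]
    exact vWF_bound hg hgb hSm hS1 hSR hR h
  · rw [Set.indicator_of_notMem h]
    simp only [norm_zero]
    positivity

lemma popRisk_expand (hg : Measurable g) (hgb : ∀ t, 0 ≤ g t ∧ g t ≤ 1)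
    (hSm : MeasurableSet S) (hS1 : P S = 1)
    (hSR : ∀ z ∈ S, norm2 z.1 ≤ R)
    (hSp : ∀ z ∈ S, ∀ z' ∈ S, 0 ≤ ipY z.2 z'.2 ∧ ipY z.2 z'.2 ≤ Lbar)
    (hR : 0 ≤ R) (hLb : 0 ≤ Lbar) (lam : ℝ) {A : Matrix (Fin d) (Fin d) ℝ}
    (hA : A.IsHermitian) :
    (∫ z, (∫ z', lossFn g lam A z z' ∂P) ∂P)
      = (∫ z', S.indicator (c0F g P) z' ∂P)
        - 2 * (∑ p : Fin d × Fin d, A p.1 p.2 * (∫ z', S.indicator (vVF g P) z' ∂P) p)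
        + (∑ q : (Fin d × Fin d) × (Fin d × Fin d), A q.1.1 q.1.2 * A q.2.1 q.2.2
            * (∫ z', S.indicator (vWF g P) z' ∂P) q)
        + lam * A.trace := by
  have intc : Integrable (S.indicator (c0F g P)) P :=
    Integrable.mono' (integrable_const (Lbar ^ 2))
      ((meas_c0F hg).indicator hSm).aestronglyMeasurable
      (Filter.Eventually.of_forall (c0I_bound hg hgb hSm hS1 hSp hLb))
  have intV : Integrable (S.indicator (vVF g P)) P :=
    Integrable.mono' (integrable_const (Lbar * R ^ 2))
      ((meas_vVF hg).indicator hSm).aestronglyMeasurable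
      (Filter.Eventually.of_forall (vVI_bound hg hgb hSm hS1 hSR hSp hR hLb))
  have intW : Integrable (S.indicator (vWF g P)) P :=
    Integrable.mono' (integrable_const (R ^ 4))
      ((meas_vWF hg).indicator hSm).aestronglyMeasurable
      (Filter.Eventually.of_forall (vWI_bound hg hgb hSm hS1 hSR hR))
  have intVp : ∀ p : Fin d × Fin d,
      Integrable (fun z' => S.indicator (vVF g P) z' p) P := by
    intro p
    refine Integrable.mono' (integrable_const (Lbar * R ^ 2))
      (((measurable_pi_apply p).comp ((WithLp.measurable_ofLp 2 _).comp ((meas_vVF hg).indicator hSm))).aestronglyMeasurable)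
      (Filter.Eventually.of_forall fun z' => ?_)
    rw [Real.norm_eq_abs]
    exact le_trans (euclid_component_le _ p) (vVI_bound hg hgb hSm hS1 hSR hSp hR hLb z')
  have intWq : ∀ q : (Fin d × Fin d) × (Fin d × Fin d),
      Integrable (fun z' => S.indicator (vWF g P) z' q) P := by
    intro q
    refine Integrable.mono' (integrable_const (R ^ 4))
      (((measurable_pi_apply q).comp ((WithLp.measurable_ofLp 2 _).comp ((meas_vWF hg).indicator hSm))).aestronglyMeasurable)
      (Filter.Eventually.of_forall fun z' => ?_)
    rw [Real.norm_eq_abs]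
    exact le_trans (euclid_component_le _ q) (vWI_bound hg hgb hSm hS1 hSR hR z')
  have hprojV : ∀ p, ∫ z', S.indicator (vVF g P) z' p ∂P
      = (∫ z', S.indicator (vVF g P) z' ∂P) p := by
    intro p
    have h := ContinuousLinearMap.integral_comp_comm (EuclideanSpace.proj p (𝕜 := ℝ)) intV
    simpa using h
  have hprojW : ∀ q, ∫ z', S.indicator (vWF g P) z' q ∂P
      = (∫ z', S.indicator (vWF g P) z' ∂P) q := by
    intro q
    have h := ContinuousLinearMap.integral_comp_comm (EuclideanSpace.proj q (𝕜 := ℝ)) intW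
    simpa using h
  have h1 : (∫ z, (∫ z', lossFn g lam A z z' ∂P) ∂P)
      = ∫ a, (∫ z, lossFn g lam A z a ∂P) ∂P :=
    integral_congr_ae (Filter.Eventually.of_forall fun z =>
      integral_congr_ae (Filter.Eventually.of_forall fun w => loss_symm g lam hA z w))
  have h2 : ∀ᵐ a ∂P, (∫ z, lossFn g lam A z a ∂P)
      = S.indicator (c0F g P) a
        - 2 * (∑ p : Fin d × Fin d, A p.1 p.2 * S.indicator (vVF g P) a p)
        + (∑ q : (Fin d × Fin d) × (Fin d × Fin d), A q.1.1 q.1.2 * A q.2.1 q.2.2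
            * S.indicator (vWF g P) a q)
        + lam * A.trace := by
    refine (ae_mem_S hSm hS1).mono fun a ha => ?_
    rw [integral_loss_eq hg hgb hSm hS1 hSR hSp hR hLb lam A ha,
      Set.indicator_of_mem ha, Set.indicator_of_mem ha, Set.indicator_of_mem ha]
  rw [h1, integral_congr_ae h2]
  have intT1 : Integrable (fun a => 2 * ∑ p : Fin d × Fin d,
      A p.1 p.2 * S.indicator (vVF g P) a p) P :=
    (integrable_finset_sum _ fun p _ => (intVp p).const_mul _).const_mul 2
  have intT2 : Integrable (fun a => ∑ q : (Fin d × Fin d) × (Fin d × Fin d),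
      A q.1.1 q.1.2 * A q.2.1 q.2.2 * S.indicator (vWF g P) a q) P :=
    integrable_finset_sum _ fun q _ => (intWq q).const_mul _
  have intA : Integrable (fun a => S.indicator (c0F g P) a
      - 2 * ∑ p : Fin d × Fin d, A p.1 p.2 * S.indicator (vVF g P) a p) P := intc.sub intT1
  have intB : Integrable (fun a => S.indicator (c0F g P) a
      - 2 * ∑ p : Fin d × Fin d, A p.1 p.2 * S.indicator (vVF g P) a p
      + ∑ q : (Fin d × Fin d) × (Fin d × Fin d),
          A q.1.1 q.1.2 * A q.2.1 q.2.2 * S.indicator (vWF g P) a q) P := intA.add intT2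
  rw [integral_add intB (integrable_const _), integral_add intA intT2,
    integral_sub intc intT1, integral_const]
  have e1 : ∫ a, (2 * ∑ p : Fin d × Fin d,
      A p.1 p.2 * S.indicator (vVF g P) a p) ∂P
      = 2 * ∑ p : Fin d × Fin d, A p.1 p.2 * (∫ z', S.indicator (vVF g P) z' ∂P) p := by
    rw [integral_const_mul, integral_finset_sum _ (fun p _ => (intVp p).const_mul _)]
    congr 1
    refine Finset.sum_congr rfl fun p _ => ?_
    rw [integral_const_mul, hprojV p]
  have e2 : ∫ a, (∑ q : (Fin d × Fin d) × (Fin d × Fin d),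
      A q.1.1 q.1.2 * A q.2.1 q.2.2 * S.indicator (vWF g P) a q) ∂P
      = ∑ q : (Fin d × Fin d) × (Fin d × Fin d), A q.1.1 q.1.2 * A q.2.1 q.2.2
          * (∫ z', S.indicator (vWF g P) z' ∂P) q := by
    rw [integral_finset_sum _ (fun q _ => (intWq q).const_mul _)]
    refine Finset.sum_congr rfl fun q _ => ?_
    rw [integral_const_mul, hprojW q]
  rw [e1, e2]
  simp [measure_univ]

end Main2

set_option maxHeartbeats 1000000 in
theorem stmt15 :
    ∃ C : ℝ, 0 < C ∧
    ∀ (d L : ℕ) (lam r R Lbar : ℝ), 0 < lam → 0 < r → 0 < R → 0 ≤ Lbar →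
    ∀ g : ℝ → ℝ, Measurable g → (∀ t, 0 ≤ g t ∧ g t ≤ 1) →
    ∀ P : Measure (Pt d L), IsProbabilityMeasure P →
    ∀ S : Set (Pt d L), MeasurableSet S → P S = 1 →
    (∀ z ∈ S, norm2 z.1 ≤ R) →
    (∀ z ∈ S, ∀ z' ∈ S, 0 ≤ ipY z.2 z'.2 ∧ ipY z.2 z'.2 ≤ Lbar) →
    ∀ n : ℕ, 2 ≤ n → Even n → ∀ δ : ℝ, 0 < δ → δ < 1 →
    ENNReal.ofReal (1 - δ) ≤
      (Measure.pi fun _ : Fin n => P) {D : Fin n → Pt d L |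
        (⨆ A : {A : Matrix (Fin d) (Fin d) ℝ // A.PosSemidef ∧ frobNorm A ≤ r},
          tilRisk g lam P A.1 D - popRisk g lam P A.1) ≤
        C * (r * R ^ 2 + Lbar) ^ 2 * Real.sqrt ((1 + Real.log (1 / δ)) / n)} := by
  refine ⟨10, by norm_num, ?_⟩
  intro d L lam r R Lbar hlam hr hR hLbar g hgm hgb P hP S hSm hS1 hSR hSp n hn2 _hneven δ hδ0 hδ1
  have hn1 : 1 ≤ n := le_trans (by norm_num) hn2
  have hn0 : (0 : ℝ) < n := by exact_mod_cast hn1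
  have hR0 : 0 ≤ R := hR.le
  have hδ3 : 0 < δ / 3 := by positivity
  have hδ31 : δ / 3 ≤ 1 := by linarith
  haveI : Nonempty {A : Matrix (Fin d) (Fin d) ℝ // A.PosSemidef ∧ frobNorm A ≤ r} :=
    ⟨⟨0, Matrix.PosSemidef.zero, by simpa [frobNorm] using hr.le⟩⟩
  -- the three indicator features
  have hbc : ∀ z', ‖S.indicator (c0F g P) z'‖ ≤ Lbar ^ 2 :=
    c0I_bound hgm hgb hSm hS1 hSp hLbar
  have hbV : ∀ z', ‖S.indicator (vVF g P) z'‖ ≤ Lbar * R ^ 2 :=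
    vVI_bound hgm hgb hSm hS1 hSR hSp hR0 hLbar
  have hbW : ∀ z', ‖S.indicator (vWF g P) z'‖ ≤ R ^ 4 :=
    vWI_bound hgm hgb hSm hS1 hSR hR0
  have hconc_c := hilbert_conc P (S.indicator (c0F g P)) ((meas_c0F hgm).indicator hSm)
    (B := Lbar ^ 2) (by positivity) hbc n hn1 hδ3 hδ31
  have hconc_V := hilbert_conc P (S.indicator (vVF g P)) ((meas_vVF hgm).indicator hSm)
    (B := Lbar * R ^ 2) (by positivity) hbV n hn1 hδ3 hδ31
  have hconc_W := hilbert_conc P (S.indicator (vWF g P)) ((meas_vWF hgm).indicator hSm)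
    (B := R ^ 4) (by positivity) hbW n hn1 hδ3 hδ31
  -- names
  set mc : ℝ := ∫ z', S.indicator (c0F g P) z' ∂P with hmc
  set mV : EuclideanSpace ℝ (Fin d × Fin d) := ∫ z', S.indicator (vVF g P) z' ∂P with hmV
  set mW : EuclideanSpace ℝ ((Fin d × Fin d) × (Fin d × Fin d)) :=
    ∫ z', S.indicator (vWF g P) z' ∂P with hmW
  set Ec := {D : Fin n → Pt d L |
    2 * Lbar ^ 2 * Real.sqrt n + 4 * Lbar ^ 2 * Real.sqrt (n * Real.log (1 / (δ / 3)))
      < ‖∑ k, (S.indicator (c0F g P) (D k) - mc)‖} with hEc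
  set EV := {D : Fin n → Pt d L |
    2 * (Lbar * R ^ 2) * Real.sqrt n
      + 4 * (Lbar * R ^ 2) * Real.sqrt (n * Real.log (1 / (δ / 3)))
      < ‖∑ k, (S.indicator (vVF g P) (D k) - mV)‖} with hEV
  set EW := {D : Fin n → Pt d L |
    2 * R ^ 4 * Real.sqrt n + 4 * R ^ 4 * Real.sqrt (n * Real.log (1 / (δ / 3)))
      < ‖∑ k, (S.indicator (vWF g P) (D k) - mW)‖} with hEW
  set Sn := {D : Fin n → Pt d L | ∀ k, D k ∈ S} with hSn
  -- measure of the bad set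
  have hSnc : (Measure.pi fun _ : Fin n => P) Snᶜ = 0 := by
    have hmeas : MeasurableSet Sn := by
      have : Sn = Set.pi Set.univ (fun _ : Fin n => S) := by
        ext D; simp [hSn, Set.mem_pi]
      rw [this]
      exact MeasurableSet.univ_pi fun _ => hSm
    have h1 : (Measure.pi fun _ : Fin n => P) Sn = 1 := by
      have : Sn = Set.pi Set.univ (fun _ : Fin n => S) := by
        ext D; simp [hSn, Set.mem_pi]
      rw [this, Measure.pi_pi]
      simp [hS1]
    rw [measure_compl hmeas (measure_ne_top _ _), h1, measure_univ, tsub_self]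
  have hbad : (Measure.pi fun _ : Fin n => P) (Ec ∪ EV ∪ EW ∪ Snᶜ) ≤ ENNReal.ofReal δ := by
    calc (Measure.pi fun _ : Fin n => P) (Ec ∪ EV ∪ EW ∪ Snᶜ)
        ≤ (Measure.pi fun _ : Fin n => P) (Ec ∪ EV ∪ EW)
          + (Measure.pi fun _ : Fin n => P) Snᶜ := measure_union_le _ _
      _ ≤ ((Measure.pi fun _ : Fin n => P) (Ec ∪ EV)
          + (Measure.pi fun _ : Fin n => P) EW) + 0 := by
          rw [hSnc]
          exact add_le_add (measure_union_le _ _) le_rfl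
      _ ≤ (((Measure.pi fun _ : Fin n => P) Ec + (Measure.pi fun _ : Fin n => P) EV)
          + (Measure.pi fun _ : Fin n => P) EW) + 0 :=
          add_le_add (add_le_add (measure_union_le _ _) le_rfl) le_rfl
      _ ≤ ((ENNReal.ofReal (δ / 3) + ENNReal.ofReal (δ / 3)) + ENNReal.ofReal (δ / 3)) + 0 :=
          add_le_add (add_le_add (add_le_add hconc_c hconc_V) hconc_W) le_rfl
      _ = ENNReal.ofReal δ := by
          rw [add_zero, ← ENNReal.ofReal_add (by positivity) (by positivity),
            ← ENNReal.ofReal_add (by positivity) (by positivity)]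
          congr 1
          ring
  -- the deterministic inclusion
  have hsubset : (Ec ∪ EV ∪ EW ∪ Snᶜ)ᶜ ⊆ {D : Fin n → Pt d L |
      (⨆ A : {A : Matrix (Fin d) (Fin d) ℝ // A.PosSemidef ∧ frobNorm A ≤ r},
        tilRisk g lam P A.1 D - popRisk g lam P A.1) ≤
      10 * (r * R ^ 2 + Lbar) ^ 2 * Real.sqrt ((1 + Real.log (1 / δ)) / n)} := by
    intro D hD
    simp only [Set.mem_compl_iff, Set.mem_union, not_or] at hD
    obtain ⟨⟨⟨hD1, hD2⟩, hD3⟩, hD4⟩ := hD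
    have hDS : ∀ k, D k ∈ S := by simpa [hSn] using hD4
    have hc' : ‖∑ k, (S.indicator (c0F g P) (D k) - mc)‖
        ≤ 2 * Lbar ^ 2 * Real.sqrt n
          + 4 * Lbar ^ 2 * Real.sqrt (n * Real.log (1 / (δ / 3))) := not_lt.1 hD1
    have hV' : ‖∑ k, (S.indicator (vVF g P) (D k) - mV)‖
        ≤ 2 * (Lbar * R ^ 2) * Real.sqrt n
          + 4 * (Lbar * R ^ 2) * Real.sqrt (n * Real.log (1 / (δ / 3))) := not_lt.1 hD2
    have hW' : ‖∑ k, (S.indicator (vWF g P) (D k) - mW)‖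
        ≤ 2 * R ^ 4 * Real.sqrt n
          + 4 * R ^ 4 * Real.sqrt (n * Real.log (1 / (δ / 3))) := not_lt.1 hD3
    set u : ℝ := 2 * Real.sqrt n + 4 * Real.sqrt (n * Real.log (1 / (δ / 3))) with hu
    have hu0 : 0 ≤ u := by
      rw [hu]; positivity
    simp only [Set.mem_setOf_eq]
    refine ciSup_le ?_
    rintro ⟨A, hpsd, hfrob⟩
    have hherm : A.IsHermitian := hpsd.1
    have hfrob0 : 0 ≤ frobNorm A := Real.sqrt_nonneg _
    -- expansion of each sample term
    have hterm : ∀ k, ∫ z, lossFn g lam A z (D k) ∂P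
        = S.indicator (c0F g P) (D k)
          - 2 * (∑ p : Fin d × Fin d, A p.1 p.2 * S.indicator (vVF g P) (D k) p)
          + (∑ q : (Fin d × Fin d) × (Fin d × Fin d), A q.1.1 q.1.2 * A q.2.1 q.2.2
              * S.indicator (vWF g P) (D k) q)
          + lam * A.trace := by
      intro k
      rw [Set.indicator_of_mem (hDS k), Set.indicator_of_mem (hDS k),
        Set.indicator_of_mem (hDS k)]
      exact integral_loss_eq hgm hgb hSm hS1 hSR hSp hR0 hLbar lam A (hDS k)
    have htil : tilRisk g lam P A D
        = (1 / (n : ℝ)) * ∑ k, (S.indicator (c0F g P) (D k)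
          - 2 * (∑ p : Fin d × Fin d, A p.1 p.2 * S.indicator (vVF g P) (D k) p)
          + (∑ q : (Fin d × Fin d) × (Fin d × Fin d), A q.1.1 q.1.2 * A q.2.1 q.2.2
              * S.indicator (vWF g P) (D k) q)
          + lam * A.trace) := by
      rw [tilRisk]
      congr 1
      exact Finset.sum_congr rfl fun k _ => hterm k
    have hpop : popRisk g lam P A
        = mc - 2 * (∑ p : Fin d × Fin d, A p.1 p.2 * mV p)
          + (∑ q : (Fin d × Fin d) × (Fin d × Fin d),
              A q.1.1 q.1.2 * A q.2.1 q.2.2 * mW q)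
          + lam * A.trace := by
      rw [popRisk, hmc, hmV, hmW]
      exact popRisk_expand hgm hgb hSm hS1 hSR hSp hR0 hLbar lam hherm
    -- algebraic reorganisation
    have hswapV : ∑ k, ∑ p : Fin d × Fin d, A p.1 p.2 * S.indicator (vVF g P) (D k) p
        = ∑ p : Fin d × Fin d, A p.1 p.2 * ∑ k, S.indicator (vVF g P) (D k) p := by
      rw [Finset.sum_comm]
      exact Finset.sum_congr rfl fun p _ => by rw [Finset.mul_sum]
    have hswapW : ∑ k, ∑ q : (Fin d × Fin d) × (Fin d × Fin d),
          A q.1.1 q.1.2 * A q.2.1 q.2.2 * S.indicator (vWF g P) (D k) q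
        = ∑ q : (Fin d × Fin d) × (Fin d × Fin d), A q.1.1 q.1.2 * A q.2.1 q.2.2
            * ∑ k, S.indicator (vWF g P) (D k) q := by
      rw [Finset.sum_comm]
      exact Finset.sum_congr rfl fun q _ => by rw [Finset.mul_sum]
    have hScEq : (∑ k, (S.indicator (c0F g P) (D k) - mc))
        = (∑ k, S.indicator (c0F g P) (D k)) - n * mc := by
      rw [Finset.sum_sub_distrib, Finset.sum_const, Finset.card_univ, Fintype.card_fin,
        nsmul_eq_mul]
    have hSVEq : ∀ p, (∑ k, (S.indicator (vVF g P) (D k) - mV)) p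
        = (∑ k, S.indicator (vVF g P) (D k) p) - n * mV p := by
      intro p
      rw [WithLp.ofLp_sum, Finset.sum_apply]
      have h1 : ∀ k : Fin n, (S.indicator (vVF g P) (D k) - mV) p
          = S.indicator (vVF g P) (D k) p - mV p := fun k => rfl
      rw [Finset.sum_congr rfl fun k _ => h1 k, Finset.sum_sub_distrib, Finset.sum_const,
        Finset.card_univ, Fintype.card_fin, nsmul_eq_mul]
    have hSWEq : ∀ q, (∑ k, (S.indicator (vWF g P) (D k) - mW)) q
        = (∑ k, S.indicator (vWF g P) (D k) q) - n * mW q := by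
      intro q
      rw [WithLp.ofLp_sum, Finset.sum_apply]
      have h1 : ∀ k : Fin n, (S.indicator (vWF g P) (D k) - mW) q
          = S.indicator (vWF g P) (D k) q - mW q := fun k => rfl
      rw [Finset.sum_congr rfl fun k _ => h1 k, Finset.sum_sub_distrib, Finset.sum_const,
        Finset.card_univ, Fintype.card_fin, nsmul_eq_mul]
    have hsumV' : ∑ p : Fin d × Fin d, A p.1 p.2 * (∑ k, (S.indicator (vVF g P) (D k) - mV)) p
        = (∑ p : Fin d × Fin d, A p.1 p.2 * ∑ k, S.indicator (vVF g P) (D k) p)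
          - n * ∑ p : Fin d × Fin d, A p.1 p.2 * mV p := by
      rw [Finset.sum_congr rfl fun p _ => by rw [hSVEq p]]
      rw [Finset.mul_sum]
      rw [← Finset.sum_sub_distrib]
      exact Finset.sum_congr rfl fun p _ => by ring
    have hsumW' : ∑ q : (Fin d × Fin d) × (Fin d × Fin d),
          A q.1.1 q.1.2 * A q.2.1 q.2.2 * (∑ k, (S.indicator (vWF g P) (D k) - mW)) q
        = (∑ q : (Fin d × Fin d) × (Fin d × Fin d), A q.1.1 q.1.2 * A q.2.1 q.2.2
            * ∑ k, S.indicator (vWF g P) (D k) q)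
          - n * ∑ q : (Fin d × Fin d) × (Fin d × Fin d),
              A q.1.1 q.1.2 * A q.2.1 q.2.2 * mW q := by
      rw [Finset.sum_congr rfl fun q _ => by rw [hSWEq q]]
      rw [Finset.mul_sum]
      rw [← Finset.sum_sub_distrib]
      exact Finset.sum_congr rfl fun q _ => by ring
    have hsplit : ∑ k, (S.indicator (c0F g P) (D k)
          - 2 * (∑ p : Fin d × Fin d, A p.1 p.2 * S.indicator (vVF g P) (D k) p)
          + (∑ q : (Fin d × Fin d) × (Fin d × Fin d), A q.1.1 q.1.2 * A q.2.1 q.2.2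
              * S.indicator (vWF g P) (D k) q)
          + lam * A.trace)
        = (∑ k, S.indicator (c0F g P) (D k))
          - 2 * (∑ p : Fin d × Fin d, A p.1 p.2 * ∑ k, S.indicator (vVF g P) (D k) p)
          + (∑ q : (Fin d × Fin d) × (Fin d × Fin d), A q.1.1 q.1.2 * A q.2.1 q.2.2
              * ∑ k, S.indicator (vWF g P) (D k) q)
          + n * (lam * A.trace) := by
      rw [Finset.sum_add_distrib, Finset.sum_add_distrib, Finset.sum_sub_distrib,
        Finset.sum_const, Finset.card_univ, Fintype.card_fin, nsmul_eq_mul,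
        ← Finset.mul_sum, hswapV, hswapW]
    have hdiff : tilRisk g lam P A D - popRisk g lam P A
        = (1 / (n : ℝ)) * (∑ k, (S.indicator (c0F g P) (D k) - mc))
          - 2 * ((1 / (n : ℝ)) * ∑ p : Fin d × Fin d,
              A p.1 p.2 * (∑ k, (S.indicator (vVF g P) (D k) - mV)) p)
          + (1 / (n : ℝ)) * ∑ q : (Fin d × Fin d) × (Fin d × Fin d),
              A q.1.1 q.1.2 * A q.2.1 q.2.2 * (∑ k, (S.indicator (vWF g P) (D k) - mW)) q := by
      rw [htil, hpop, hsplit, hScEq, hsumV', hsumW']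
      field_simp
      ring
    -- Cauchy-Schwarz bounds
    have heqc : 2 * Lbar ^ 2 * Real.sqrt n
        + 4 * Lbar ^ 2 * Real.sqrt (n * Real.log (1 / (δ / 3))) = Lbar ^ 2 * u := by
      rw [hu]; ring
    have heqV : 2 * (Lbar * R ^ 2) * Real.sqrt n
        + 4 * (Lbar * R ^ 2) * Real.sqrt (n * Real.log (1 / (δ / 3)))
        = (Lbar * R ^ 2) * u := by rw [hu]; ring
    have heqW : 2 * R ^ 4 * Real.sqrt n
        + 4 * R ^ 4 * Real.sqrt (n * Real.log (1 / (δ / 3))) = R ^ 4 * u := by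
      rw [hu]; ring
    have hcu : |∑ k, (S.indicator (c0F g P) (D k) - mc)| ≤ Lbar ^ 2 * u := by
      rw [← heqc, ← Real.norm_eq_abs]
      exact hc'
    have hVu : ‖∑ k, (S.indicator (vVF g P) (D k) - mV)‖ ≤ (Lbar * R ^ 2) * u :=
      heqV ▸ hV'
    have hWu : ‖∑ k, (S.indicator (vWF g P) (D k) - mW)‖ ≤ R ^ 4 * u :=
      heqW ▸ hW'
    have hCSV : |∑ p : Fin d × Fin d, A p.1 p.2
          * (∑ k, (S.indicator (vVF g P) (D k) - mV)) p|
        ≤ r * ((Lbar * R ^ 2) * u) := by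
      have h := abs_sum_mul_le (matE A) (∑ k, (S.indicator (vVF g P) (D k) - mV))
      rw [frobE_norm] at h
      have h2 : ∑ p : Fin d × Fin d, matE A p * (∑ k, (S.indicator (vVF g P) (D k) - mV)) p
          = ∑ p : Fin d × Fin d, A p.1 p.2 * (∑ k, (S.indicator (vVF g P) (D k) - mV)) p :=
        Finset.sum_congr rfl fun p _ => by rw [matE]
      rw [h2] at h
      exact le_trans h (mul_le_mul hfrob hVu (norm_nonneg _) hr.le)
    have hCSW : |∑ q : (Fin d × Fin d) × (Fin d × Fin d), A q.1.1 q.1.2 * A q.2.1 q.2.2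
          * (∑ k, (S.indicator (vWF g P) (D k) - mW)) q|
        ≤ r ^ 2 * (R ^ 4 * u) := by
      have h := abs_sum_mul_le (matE2 A) (∑ k, (S.indicator (vWF g P) (D k) - mW))
      rw [frobE2_norm] at h
      have h2 : ∑ q : (Fin d × Fin d) × (Fin d × Fin d),
            matE2 A q * (∑ k, (S.indicator (vWF g P) (D k) - mW)) q
          = ∑ q : (Fin d × Fin d) × (Fin d × Fin d), A q.1.1 q.1.2 * A q.2.1 q.2.2
              * (∑ k, (S.indicator (vWF g P) (D k) - mW)) q :=
        Finset.sum_congr rfl fun q _ => by rw [matE2]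
      rw [h2] at h
      refine le_trans h (mul_le_mul ?_ hWu (norm_nonneg _) (by positivity))
      exact pow_le_pow_left₀ hfrob0 hfrob 2
    -- put the three bounds together
    have h1n : (0 : ℝ) < 1 / (n : ℝ) := by positivity
    have hb1 : (1 / (n : ℝ)) * (∑ k, (S.indicator (c0F g P) (D k) - mc))
        ≤ (1 / (n : ℝ)) * (Lbar ^ 2 * u) :=
      mul_le_mul_of_nonneg_left (le_trans (le_abs_self _) hcu) h1n.le
    have hb2 : -(2 * ((1 / (n : ℝ)) * ∑ p : Fin d × Fin d,
          A p.1 p.2 * (∑ k, (S.indicator (vVF g P) (D k) - mV)) p))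
        ≤ 2 * ((1 / (n : ℝ)) * (r * ((Lbar * R ^ 2) * u))) := by
      have hX : -(∑ p : Fin d × Fin d,
          A p.1 p.2 * (∑ k, (S.indicator (vVF g P) (D k) - mV)) p)
          ≤ r * ((Lbar * R ^ 2) * u) := le_trans (neg_le_abs _) hCSV
      have h2 := mul_le_mul_of_nonneg_left hX h1n.le
      linarith
    have hb3 : (1 / (n : ℝ)) * (∑ q : (Fin d × Fin d) × (Fin d × Fin d),
          A q.1.1 q.1.2 * A q.2.1 q.2.2 * (∑ k, (S.indicator (vWF g P) (D k) - mW)) q)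
        ≤ (1 / (n : ℝ)) * (r ^ 2 * (R ^ 4 * u)) :=
      mul_le_mul_of_nonneg_left (le_trans (le_abs_self _) hCSW) h1n.le
    have hmain : tilRisk g lam P A D - popRisk g lam P A
        ≤ (u / n) * (r * R ^ 2 + Lbar) ^ 2 := by
      rw [hdiff]
      have hexp : (1 / (n : ℝ)) * (Lbar ^ 2 * u)
          + 2 * ((1 / (n : ℝ)) * (r * ((Lbar * R ^ 2) * u)))
          + (1 / (n : ℝ)) * (r ^ 2 * (R ^ 4 * u))
          = (u / n) * (r * R ^ 2 + Lbar) ^ 2 := by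
        field_simp
        ring
      linarith
    have harith : (u / n) ≤ 10 * Real.sqrt ((1 + Real.log (1 / δ)) / n) := by
      rw [hu]
      exact arith_bound hn1 hδ0 hδ1
    calc tilRisk g lam P A D - popRisk g lam P A
        ≤ (u / n) * (r * R ^ 2 + Lbar) ^ 2 := hmain
      _ ≤ (10 * Real.sqrt ((1 + Real.log (1 / δ)) / n)) * (r * R ^ 2 + Lbar) ^ 2 :=
          mul_le_mul_of_nonneg_right harith (by positivity)
      _ = 10 * (r * R ^ 2 + Lbar) ^ 2 * Real.sqrt ((1 + Real.log (1 / δ)) / n) := by ring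
  -- probability assembly
  refine le_trans ?_ (measure_mono hsubset)
  have h1 : (1 : ℝ≥0∞) ≤ (Measure.pi fun _ : Fin n => P) (Ec ∪ EV ∪ EW ∪ Snᶜ)ᶜ
      + (Measure.pi fun _ : Fin n => P) (Ec ∪ EV ∪ EW ∪ Snᶜ) := by
    have h2 : (Set.univ : Set (Fin n → Pt d L))
        = (Ec ∪ EV ∪ EW ∪ Snᶜ)ᶜ ∪ (Ec ∪ EV ∪ EW ∪ Snᶜ) := (Set.compl_union_self _).symm
    calc (1 : ℝ≥0∞) = (Measure.pi fun _ : Fin n => P) Set.univ := measure_univ.symm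
      _ = (Measure.pi fun _ : Fin n => P) ((Ec ∪ EV ∪ EW ∪ Snᶜ)ᶜ ∪ (Ec ∪ EV ∪ EW ∪ Snᶜ)) := by
          rw [← h2]
      _ ≤ _ := measure_union_le _ _
  calc ENNReal.ofReal (1 - δ) = 1 - ENNReal.ofReal δ := by
        rw [ENNReal.ofReal_sub _ hδ0.le, ENNReal.ofReal_one]
    _ ≤ (Measure.pi fun _ : Fin n => P) (Ec ∪ EV ∪ EW ∪ Snᶜ)ᶜ := by
        rw [tsub_le_iff_right]
        calc (1 : ℝ≥0∞) ≤ (Measure.pi fun _ : Fin n => P) (Ec ∪ EV ∪ EW ∪ Snᶜ)ᶜ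
              + (Measure.pi fun _ : Fin n => P) (Ec ∪ EV ∪ EW ∪ Snᶜ) := h1
          _ ≤ (Measure.pi fun _ : Fin n => P) (Ec ∪ EV ∪ EW ∪ Snᶜ)ᶜ + ENNReal.ofReal δ :=
              add_le_add le_rfl hbad

end
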